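/- arXiv:2302.02340 — 7 statements merged into one kernel-verified Lean document; each statement's English description precedes it below -/
import Mathlib

section
/- Let 0 < α < 1 and a ∈ ℂ. The function u(τ) = E_α(a τ^α) is differentiable on (0, ∞), for every t > 0 the function τ ↦ u'(τ)(t−τ)^{−α} is integrable on (0, t), and the Caputo fractional derivative satisfies (1/Γ(1−α)) ∫_0^t u'(τ)(t−τ)^{−α} dτ = a · E_α(a t^α); i.e., the Mittag-Leffler function E_α(a t^α) is an eigenfunction of the Caputo fractional derivative of order α with eigenvalue a. -/
open MeasureTheory

open Set Filter

lemma gamma_ineq {α x : ℝ} (hα0 : 0 < α) (hα1 : α < 1) (hx : 0 < x) :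
    Real.Gamma (x + 1) ≤ Real.Gamma (x + α) * (x + α) ^ (1 - α) := by
  have hxα : 0 < x + α := by linarith
  have hxα1 : 0 < x + α + 1 := by linarith
  have hconv := Real.convexOn_log_Gamma.2 (mem_Ioi.2 hxα) (mem_Ioi.2 hxα1)
    hα0.le (by linarith : (0:ℝ) ≤ 1 - α) (by ring)
  simp only [smul_eq_mul, Function.comp_apply] at hconv
  have harg : α * (x + α) + (1 - α) * (x + α + 1) = x + 1 := by ring
  rw [harg] at hconv
  have hG1 : Real.Gamma (x + α + 1) = (x + α) * Real.Gamma (x + α) :=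
    Real.Gamma_add_one hxα.ne'
  have hGpos : 0 < Real.Gamma (x + α) := Real.Gamma_pos_of_pos hxα
  rw [hG1, Real.log_mul hxα.ne' hGpos.ne'] at hconv
  have hlog : Real.log (Real.Gamma (x + 1)) ≤
      Real.log (Real.Gamma (x + α)) + (1 - α) * Real.log (x + α) := by nlinarith
  have h1 : Real.Gamma (x + 1) = Real.exp (Real.log (Real.Gamma (x + 1))) :=
    (Real.exp_log (Real.Gamma_pos_of_pos (by linarith))).symm
  rw [h1]
  calc Real.exp (Real.log (Real.Gamma (x + 1)))
      ≤ Real.exp (Real.log (Real.Gamma (x + α)) + (1 - α) * Real.log (x + α)) :=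
        Real.exp_le_exp.2 hlog
    _ = Real.Gamma (x + α) * (x + α) ^ (1 - α) := by
        rw [Real.exp_add, Real.exp_log hGpos, Real.rpow_def_of_pos hxα, mul_comm (Real.log (x+α))]

set_option maxHeartbeats 1000000 in
lemma summable_master {α b R : ℝ} (hα0 : 0 < α) (hα1 : α < 1) (hb : 0 < b) (hR : 0 ≤ R) :
    Summable (fun k : ℕ => (k + 1 : ℝ) * R ^ k / Real.Gamma (α * k + b)) := by
  set M : ℝ := max 1 ((8 * R + 1) ^ α⁻¹) with hM
  have hM1 : (1:ℝ) ≤ M := le_max_left _ _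
  apply summable_of_ratio_norm_eventually_le (r := 1/2) (by norm_num)
  filter_upwards [eventually_ge_atTop ⌈M / α⌉₊] with k hk
  set x : ℝ := α * k + b with hxdef
  have hxM : M ≤ x := by
    have h1 : M / α ≤ (k : ℝ) := by
      calc M / α ≤ (⌈M / α⌉₊ : ℝ) := Nat.le_ceil _
        _ ≤ (k : ℝ) := Nat.cast_le.2 hk
    have : M ≤ α * k := by
      rw [← div_le_iff₀' hα0] ; exact h1
    linarith
  have hx1 : (1:ℝ) ≤ x := le_trans hM1 hxM
  have hx0 : (0:ℝ) < x := by linarith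
  have hxα : 0 < x + α := by linarith
  have hGx : 0 < Real.Gamma x := Real.Gamma_pos_of_pos hx0
  have hGxα : 0 < Real.Gamma (x + α) := Real.Gamma_pos_of_pos hxα
  have hsucc : α * (k + 1 : ℕ) + b = x + α := by push_cast; ring
  rw [hsucc]
  rcases eq_or_lt_of_le hR with hR0 | hR0
  · rw [← hR0]
    simp only [zero_pow (Nat.succ_ne_zero k), mul_zero, zero_mul, zero_div, norm_zero]
    positivity
  -- main case R > 0
  have hRk : (0:ℝ) < R ^ k := pow_pos hR0 k
  -- Gamma ratio bound
  have key : Real.Gamma x ≤ Real.Gamma (x + α) / (4 * R) := by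
    have h1 : x * Real.Gamma x ≤ Real.Gamma (x + α) * (x + α) ^ (1 - α) := by
      have := gamma_ineq hα0 hα1 hx0
      rwa [Real.Gamma_add_one hx0.ne'] at this
    have h2 : (x + α) ^ (1 - α) ≤ 2 * x ^ (1 - α) := by
      calc (x + α) ^ (1 - α) ≤ (2 * x) ^ (1 - α) :=
            Real.rpow_le_rpow hxα.le (by linarith) (by linarith)
        _ = 2 ^ (1 - α) * x ^ (1 - α) := Real.mul_rpow (by norm_num) hx0.le
        _ ≤ 2 * x ^ (1 - α) := by
            have : (2:ℝ) ^ (1 - α) ≤ 2 ^ (1:ℝ) :=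
              Real.rpow_le_rpow_of_exponent_le (by norm_num) (by linarith)
            rw [Real.rpow_one] at this
            have hxp : (0:ℝ) ≤ x ^ (1 - α) := Real.rpow_nonneg hx0.le _
            nlinarith
    have h3 : 8 * R + 1 ≤ x ^ α := by
      have hle : (8 * R + 1) ^ α⁻¹ ≤ x := le_trans (le_max_right _ _) hxM
      calc 8 * R + 1 = ((8 * R + 1) ^ α⁻¹) ^ α :=
            (Real.rpow_inv_rpow (by linarith) hα0.ne').symm
        _ ≤ x ^ α := Real.rpow_le_rpow (Real.rpow_nonneg (by linarith) _) hle hα0.le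
    have h4 : x ^ (1 - α) = x * (x ^ α)⁻¹ := by
      have : x ^ (1 - α) = x ^ (1:ℝ) * x ^ (-α) := by
        rw [← Real.rpow_add hx0]; ring_nf
      rw [this, Real.rpow_one, Real.rpow_neg hx0.le]
    have hxapos : 0 < x ^ α := Real.rpow_pos_of_pos hx0 α
    have h5 : x * Real.Gamma x ≤ Real.Gamma (x + α) * (2 * (x * (x ^ α)⁻¹)) := by
      calc x * Real.Gamma x ≤ Real.Gamma (x + α) * (x + α) ^ (1 - α) := h1
        _ ≤ Real.Gamma (x + α) * (2 * x ^ (1 - α)) := by nlinarith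
        _ = Real.Gamma (x + α) * (2 * (x * (x ^ α)⁻¹)) := by rw [h4]
    have h6 : Real.Gamma x ≤ Real.Gamma (x + α) * (2 * (x ^ α)⁻¹) := by
      have h5' : x * Real.Gamma x ≤ x * (Real.Gamma (x + α) * (2 * (x ^ α)⁻¹)) := by
        calc x * Real.Gamma x ≤ Real.Gamma (x + α) * (2 * (x * (x ^ α)⁻¹)) := h5
          _ = x * (Real.Gamma (x + α) * (2 * (x ^ α)⁻¹)) := by ring
      exact le_of_mul_le_mul_left h5' hx0
    calc Real.Gamma x ≤ Real.Gamma (x + α) * (2 * (x ^ α)⁻¹) := h6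
      _ ≤ Real.Gamma (x + α) * (2 * (8 * R)⁻¹) := by
          have hinv : (x ^ α)⁻¹ ≤ (8 * R)⁻¹ := by
            apply inv_anti₀ (by linarith) (by linarith)
          have h8 : (0:ℝ) < 8 * R := by linarith
          nlinarith
      _ = Real.Gamma (x + α) / (4 * R) := by field_simp; ring
  -- conclude ratio bound
  rw [Real.norm_eq_abs, Real.norm_eq_abs,
    abs_of_nonneg (by positivity), abs_of_nonneg (by positivity),
    show (1:ℝ)/2 * (((k:ℝ) + 1) * R ^ k / Real.Gamma x) =
      (1/2 * (((k:ℝ) + 1) * R ^ k)) / Real.Gamma x from by ring,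
    div_le_div_iff₀ hGxα hGx]
  push_cast
  calc ((k:ℝ) + 1 + 1) * R ^ (k + 1) * Real.Gamma x
      ≤ ((k:ℝ) + 1 + 1) * R ^ (k + 1) * (Real.Gamma (x + α) / (4 * R)) := by
        have h9 : (0:ℝ) < ((k:ℝ) + 1 + 1) * R ^ (k+1) := by positivity
        nlinarith [pow_pos hR0 (k+1)]
    _ = (((k:ℝ) + 1 + 1) / 4) * R ^ k * Real.Gamma (x + α) := by
        rw [pow_succ]; field_simp
    _ ≤ (1 / 2 * ((k:ℝ) + 1)) * R ^ k * Real.Gamma (x + α) := by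
        have hk2 : ((k:ℝ) + 1 + 1) / 4 ≤ 1 / 2 * ((k:ℝ) + 1) := by
          have : (0:ℝ) ≤ (k:ℝ) := Nat.cast_nonneg k
          nlinarith
        exact mul_le_mul_of_nonneg_right (mul_le_mul_of_nonneg_right hk2 hRk.le) hGxα.le
    _ = 1 / 2 * (((k:ℝ) + 1) * R ^ k) * Real.Gamma (x + α) := by ring


lemma norm_tsum_le_c (f : ℕ → ℂ) : ‖∑' k, f k‖ ≤ ∑' k, ‖f k‖ := by
  by_cases h : Summable fun k => ‖f k‖
  · exact norm_tsum_le_tsum_norm h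
  · have hf : ¬ Summable f := fun hs => h (summable_norm_iff.2 hs)
    rw [tsum_eq_zero_of_not_summable hf, norm_zero]
    exact tsum_nonneg fun k => norm_nonneg _

lemma integrable_tsum_c {F : ℕ → ℝ → ℂ} {μ : Measure ℝ}
    (hm : AEStronglyMeasurable (fun τ => ∑' k, F k τ) μ)
    (h_int : ∀ k, Integrable (F k) μ)
    (h_sum : Summable fun k => ∫ τ, ‖F k τ‖ ∂μ) :
    Integrable (fun τ => ∑' k, F k τ) μ := by
  refine ⟨hm, ?_⟩
  have hpt : ∀ τ, (‖∑' k, F k τ‖₊ : ENNReal) ≤ ∑' k, (‖F k τ‖₊ : ENNReal) := by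
    intro τ
    by_cases hs : Summable fun k => ‖F k τ‖₊
    · have h2 : ((∑' k, ‖F k τ‖₊ : NNReal) : ℝ) = ∑' k, ‖F k τ‖ := by
        rw [NNReal.coe_tsum]
        simp [coe_nnnorm]
      have h1 : ‖∑' k, F k τ‖₊ ≤ ∑' k, ‖F k τ‖₊ := by
        rw [← NNReal.coe_le_coe, coe_nnnorm, h2]
        exact norm_tsum_le_c (fun k => F k τ)
      exact le_trans (ENNReal.coe_le_coe.2 h1) (le_of_eq (ENNReal.coe_tsum hs))
    · have hT : ∑' k, (‖F k τ‖₊ : ENNReal) = ⊤ := by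
        by_contra hne
        exact hs (ENNReal.tsum_coe_ne_top_iff_summable.1 hne)
      rw [hT]; exact le_top
  refine lt_of_le_of_lt ?_
    (ENNReal.ofReal_lt_top : ENNReal.ofReal (∑' k, ∫ τ, ‖F k τ‖ ∂μ) < ⊤)
  calc ∫⁻ τ, ‖∑' k, F k τ‖₊ ∂μ ≤ ∫⁻ τ, ∑' k, (‖F k τ‖₊ : ENNReal) ∂μ :=
        lintegral_mono fun τ => hpt τ
    _ = ∑' k, ∫⁻ τ, (‖F k τ‖₊ : ENNReal) ∂μ :=
        lintegral_tsum fun k => (h_int k).aestronglyMeasurable.enorm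
    _ = ∑' k, ENNReal.ofReal (∫ τ, ‖F k τ‖ ∂μ) := by
        congr 1; funext k; exact (ofReal_integral_norm_eq_lintegral_enorm (h_int k)).symm
    _ = ENNReal.ofReal (∑' k, ∫ τ, ‖F k τ‖ ∂μ) :=
        (ENNReal.ofReal_tsum_of_nonneg (fun k => integral_nonneg fun τ => norm_nonneg _) h_sum).symm

lemma beta_c_integrableOn {p q t : ℝ} (hp : 0 < p) (hq : 0 < q) (ht : 0 < t) :
    IntegrableOn (fun τ : ℝ => (τ:ℂ) ^ ((p:ℂ) - 1) * ((t:ℂ) - (τ:ℂ)) ^ ((q:ℂ) - 1))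
      (Set.Ioc 0 t) := by
  have hB : IntervalIntegrable
      (fun x : ℝ => (x:ℂ) ^ ((p:ℂ)-1) * (1 - (x:ℂ)) ^ ((q:ℂ)-1)) volume 0 1 :=
    Complex.betaIntegral_convergent (by simpa using hp) (by simpa using hq)
  have h2 := hB.comp_mul_right (c := t⁻¹)
  rw [zero_div, one_div, inv_inv] at h2
  have h3 := h2.const_mul ((t:ℂ) ^ ((p:ℂ)-1) * (t:ℂ) ^ ((q:ℂ)-1))
  rw [intervalIntegrable_iff_integrableOn_Ioc_of_le ht.le] at h3
  refine h3.congr_fun ?_ measurableSet_Ioc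
  intro τ hτ
  obtain ⟨hτ0, hτt⟩ := hτ
  have htc : (t:ℂ) ≠ 0 := Complex.ofReal_ne_zero.2 ht.ne'
  have e1 : (τ:ℂ)^((p:ℂ)-1) = (t:ℂ)^((p:ℂ)-1) * ((τ*t⁻¹ : ℝ):ℂ)^((p:ℂ)-1) := by
    rw [← Complex.mul_cpow_ofReal_nonneg ht.le (by positivity)]
    congr 1
    push_cast
    field_simp
  have e2 : ((t:ℂ) - τ)^((q:ℂ)-1) = (t:ℂ)^((q:ℂ)-1) * ((1 - τ*t⁻¹ : ℝ):ℂ)^((q:ℂ)-1) := by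
    rw [← Complex.mul_cpow_ofReal_nonneg ht.le
      (by rw [sub_nonneg, ← div_eq_mul_inv]; exact (div_le_one ht).2 hτt)]
    congr 1
    push_cast
    field_simp
  simp only
  rw [e1, e2]
  push_cast
  ring

lemma beta_r_integrableOn {p q t : ℝ} (hp : 0 < p) (hq : 0 < q) (ht : 0 < t) :
    IntegrableOn (fun τ : ℝ => τ ^ (p - 1) * (t - τ) ^ (q - 1)) (Set.Ioc 0 t) := by
  rw [integrableOn_Ioc_iff_integrableOn_Ioo]
  have h : IntegrableOn (fun τ : ℝ => ‖(τ:ℂ) ^ ((p:ℂ) - 1) * ((t:ℂ) - (τ:ℂ)) ^ ((q:ℂ) - 1)‖)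
      (Set.Ioo 0 t) :=
    ((beta_c_integrableOn hp hq ht).mono_set Ioo_subset_Ioc_self).norm
  refine h.congr_fun ?_ measurableSet_Ioo
  intro τ hτ
  obtain ⟨hτ0, hτt⟩ := hτ
  have htτ : (0:ℝ) < t - τ := by linarith
  simp only [norm_mul]
  rw [show ((t:ℂ) - (τ:ℂ)) = ((t - τ : ℝ):ℂ) by push_cast; ring]
  rw [Complex.norm_cpow_eq_rpow_re_of_pos hτ0 _, Complex.norm_cpow_eq_rpow_re_of_pos htτ _]
  norm_num

lemma beta_value {p q t : ℝ} (hp : 0 < p) (hq : 0 < q) (ht : 0 < t) :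
    ∫ τ in Set.Ioc 0 t, τ ^ (p - 1) * (t - τ) ^ (q - 1) =
      t ^ (p + q - 1) * (Real.Gamma p * Real.Gamma q / Real.Gamma (p + q)) := by
  have hGpq : Complex.Gamma ((p:ℂ) + (q:ℂ)) ≠ 0 := by
    rw [show ((p:ℂ) + (q:ℂ)) = ((p + q : ℝ):ℂ) by push_cast; ring, Complex.Gamma_ofReal]
    exact_mod_cast (Real.Gamma_pos_of_pos (by linarith)).ne'
  have hB : Complex.betaIntegral (p:ℂ) (q:ℂ) =
      Complex.Gamma (p:ℂ) * Complex.Gamma (q:ℂ) / Complex.Gamma ((p:ℂ) + (q:ℂ)) := by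
    rw [eq_div_iff hGpq, mul_comm (Complex.betaIntegral _ _)]
    exact (Complex.Gamma_mul_Gamma_eq_betaIntegral (by simpa using hp) (by simpa using hq)).symm
  have key : ((∫ τ in Set.Ioc 0 t, τ ^ (p - 1) * (t - τ) ^ (q - 1) : ℝ) : ℂ) =
      ((t ^ (p + q - 1) * (Real.Gamma p * Real.Gamma q / Real.Gamma (p + q)) : ℝ) : ℂ) := by
    rw [show ((∫ τ in Set.Ioc 0 t, τ ^ (p - 1) * (t - τ) ^ (q - 1) : ℝ) : ℂ) =
      ∫ τ in Set.Ioc 0 t, ((τ ^ (p - 1) * (t - τ) ^ (q - 1) : ℝ) : ℂ) from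
      (integral_ofReal (𝕜 := ℂ)).symm]
    have e : ∫ τ in Set.Ioc 0 t, ((τ ^ (p - 1) * (t - τ) ^ (q - 1) : ℝ) : ℂ) =
        ∫ τ in Set.Ioc 0 t, (τ:ℂ) ^ ((p:ℂ) - 1) * ((t:ℂ) - (τ:ℂ)) ^ ((q:ℂ) - 1) := by
      rw [integral_Ioc_eq_integral_Ioo, integral_Ioc_eq_integral_Ioo]
      refine setIntegral_congr_fun measurableSet_Ioo fun τ hτ => ?_
      obtain ⟨hτ0, hτt⟩ := hτ
      have htτ : (0:ℝ) < t - τ := by linarith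
      rw [Complex.ofReal_mul, Complex.ofReal_cpow hτ0.le, Complex.ofReal_cpow htτ.le]
      push_cast
      ring
    rw [e]
    have e2 : ∫ τ in Set.Ioc 0 t, (τ:ℂ) ^ ((p:ℂ) - 1) * ((t:ℂ) - (τ:ℂ)) ^ ((q:ℂ) - 1) =
        ∫ τ in (0:ℝ)..t, (τ:ℂ) ^ ((p:ℂ) - 1) * ((t:ℂ) - (τ:ℂ)) ^ ((q:ℂ) - 1) :=
      (intervalIntegral.integral_of_le ht.le).symm
    rw [e2, Complex.betaIntegral_scaled _ _ ht, hB]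
    rw [show ((p:ℂ) + (q:ℂ) - 1) = (((p + q - 1 : ℝ)):ℂ) by push_cast; ring]
    rw [← Complex.ofReal_cpow ht.le]
    rw [show ((p:ℂ) + (q:ℂ)) = ((p + q : ℝ):ℂ) by push_cast; ring]
    rw [Complex.Gamma_ofReal, Complex.Gamma_ofReal, Complex.Gamma_ofReal]
    push_cast
    ring
  exact_mod_cast key


/-- One-parameter Mittag-Leffler function `E_α(z) = ∑ₖ zᵏ / Γ(αk+1)`. -/
noncomputable def mittagLeffler (α : ℝ) (z : ℂ) : ℂ :=
  ∑' k : ℕ, z ^ k / Complex.Gamma ((α * k + 1 : ℝ) : ℂ)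

/-- Terms of the Mittag-Leffler series in `x`. -/
noncomputable def MLe (α : ℝ) (a : ℂ) (k : ℕ) (x : ℝ) : ℂ :=
  a ^ k * ((x ^ (α * k) : ℝ) : ℂ) / ((Real.Gamma (α * k + 1) : ℝ) : ℂ)

/-- Termwise derivatives of the Mittag-Leffler series. -/
noncomputable def MLd (α : ℝ) (a : ℂ) (k : ℕ) (x : ℝ) : ℂ :=
  a ^ k * ((α * k * x ^ (α * k - 1) : ℝ) : ℂ) / ((Real.Gamma (α * k + 1) : ℝ) : ℂ)

lemma MLd_zero (α : ℝ) (a : ℂ) (x : ℝ) : MLd α a 0 x = 0 := by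
  simp [MLd]

lemma rpow_mul_nat {x : ℝ} (hx : 0 ≤ x) (α : ℝ) (k : ℕ) :
    x ^ (α * k) = (x ^ α) ^ k := by
  rw [Real.rpow_mul hx, Real.rpow_natCast]

lemma MLe_norm_le {α : ℝ} (hα0 : 0 < α) (a : ℂ) (k : ℕ) {x : ℝ} (hx : 0 < x) :
    ‖MLe α a k x‖ ≤ (k + 1) * (‖a‖ * x ^ α) ^ k / Real.Gamma (α * k + 1) := by
  have hG : 0 < Real.Gamma (α * k + 1) := Real.Gamma_pos_of_pos (by positivity)
  have h1 : ‖MLe α a k x‖ = (‖a‖ * x ^ α) ^ k / Real.Gamma (α * k + 1) := by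
    rw [MLe, norm_div, norm_mul, norm_pow, Complex.norm_real, Complex.norm_real,
      Real.norm_eq_abs, Real.norm_eq_abs, abs_of_nonneg (Real.rpow_nonneg hx.le _),
      abs_of_nonneg hG.le, mul_pow, rpow_mul_nat hx.le]
  rw [h1]
  have hnn : (0:ℝ) ≤ (‖a‖ * x ^ α) ^ k := by positivity
  have h2 : (‖a‖ * x ^ α) ^ k ≤ ((k:ℝ) + 1) * (‖a‖ * x ^ α) ^ k := by nlinarith
  exact (div_le_div_iff_of_pos_right hG).2 h2

lemma MLd_norm_le {α : ℝ} (hα0 : 0 < α) (hα1 : α < 1) (a : ℂ) (k : ℕ) {c C x : ℝ}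
    (hc : 0 < c) (hx : x ∈ Set.Icc c C) :
    ‖MLd α a k x‖ ≤ α / c * ((k + 1) * (‖a‖ * C ^ α) ^ k / Real.Gamma (α * k + 1)) := by
  obtain ⟨hcx, hxC⟩ := hx
  have hx0 : 0 < x := lt_of_lt_of_le hc hcx
  have hC0 : 0 < C := lt_of_lt_of_le hx0 hxC
  have hG : 0 < Real.Gamma (α * k + 1) := Real.Gamma_pos_of_pos (by positivity)
  have h1 : ‖MLd α a k x‖ = ‖a‖ ^ k * (α * k * x ^ (α * k - 1)) / Real.Gamma (α * k + 1) := by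
    rw [MLd, norm_div, norm_mul, norm_pow, Complex.norm_real, Complex.norm_real,
      Real.norm_eq_abs, Real.norm_eq_abs,
      abs_of_nonneg (by positivity : (0:ℝ) ≤ α * k * x ^ (α * k - 1)),
      abs_of_nonneg hG.le]
  rw [h1, div_le_iff₀ hG]
  have hx1 : x ^ (α * k - 1) ≤ C ^ (α * k) / c := by
    have e : x ^ (α * (k:ℝ) - 1) = x ^ (α * (k:ℝ)) * x⁻¹ := by
      rw [← Real.rpow_neg_one x, ← Real.rpow_add hx0]
      ring_nf
    rw [e, div_eq_mul_inv]
    exact mul_le_mul (Real.rpow_le_rpow hx0.le hxC (by positivity))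
      (inv_anti₀ hc hcx) (by positivity) (by positivity)
  have t1 : ‖a‖ ^ k * x ^ (α * k - 1) ≤ ‖a‖ ^ k * (C ^ (α * k) / c) :=
    mul_le_mul_of_nonneg_left hx1 (by positivity)
  have t2 : α * (k:ℝ) ≤ α * ((k:ℝ) + 1) := by nlinarith [Nat.cast_nonneg (α := ℝ) k]
  calc ‖a‖ ^ k * (α * ↑k * x ^ (α * ↑k - 1)) = (α * ↑k) * (‖a‖ ^ k * x ^ (α * ↑k - 1)) := by ring
    _ ≤ (α * ↑k) * (‖a‖ ^ k * (C ^ (α * ↑k) / c)) := mul_le_mul_of_nonneg_left t1 (by positivity)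
    _ ≤ (α * (↑k + 1)) * (‖a‖ ^ k * (C ^ (α * ↑k) / c)) :=
        mul_le_mul_of_nonneg_right t2 (by positivity)
    _ = α / c * ((↑k + 1) * (‖a‖ * C ^ α) ^ k / Real.Gamma (α * ↑k + 1)) *
        Real.Gamma (α * ↑k + 1) := by
        rw [mul_pow, ← rpow_mul_nat hC0.le]
        field_simp

lemma summable_MLe {α : ℝ} (hα0 : 0 < α) (hα1 : α < 1) (a : ℂ) {x : ℝ} (hx : 0 < x) :
    Summable (fun k => MLe α a k x) :=
  Summable.of_norm_bounded
    (summable_master hα0 hα1 one_pos (by positivity : (0:ℝ) ≤ ‖a‖ * x ^ α))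
    (fun k => MLe_norm_le hα0 a k hx)

lemma tsum_MLe_eq {α : ℝ} (a : ℂ) {x : ℝ} (hx : 0 ≤ x) :
    mittagLeffler α (a * ((x ^ α : ℝ) : ℂ)) = ∑' k, MLe α a k x := by
  unfold mittagLeffler
  apply tsum_congr
  intro k
  rw [MLe, Complex.Gamma_ofReal, mul_pow, ← Complex.ofReal_pow, ← rpow_mul_nat hx α k]

lemma tendstoLU {α : ℝ} (hα0 : 0 < α) (hα1 : α < 1) (a : ℂ) :
    TendstoLocallyUniformlyOn (fun (T : Finset ℕ) x => ∑ k ∈ T, MLd α a k x)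
      (fun x => ∑' k, MLd α a k x) atTop (Set.Ioi 0) := by
  rw [tendstoLocallyUniformlyOn_iff_forall_isCompact isOpen_Ioi]
  intro K hK hKc
  rcases K.eq_empty_or_nonempty with rfl | hne
  · intro v hv
    filter_upwards with T x hx
    exact absurd hx (notMem_empty x)
  · have hcK : sInf K ∈ K := hKc.sInf_mem hne
    have hCK : sSup K ∈ K := hKc.sSup_mem hne
    have hc0 : (0:ℝ) < sInf K := hK hcK
    have hC0 : (0:ℝ) < sSup K := hK hCK
    have hsub : K ⊆ Set.Icc (sInf K) (sSup K) :=
      fun x hx => ⟨csInf_le hKc.bddBelow hx, le_csSup hKc.bddAbove hx⟩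
    have hsum : Summable (fun k : ℕ =>
        α / sInf K * ((k + 1) * (‖a‖ * (sSup K) ^ α) ^ k / Real.Gamma (α * k + 1))) :=
      (summable_master hα0 hα1 one_pos (by positivity)).mul_left _
    exact tendstoUniformlyOn_tsum hsum
      (fun k x hx => MLd_norm_le hα0 hα1 a k hc0 (hsub hx))

lemma MLd_hasDeriv {α : ℝ} (a : ℂ) (k : ℕ) {x : ℝ} (hx : 0 < x) :
    HasDerivAt (fun y => MLe α a k y) (MLd α a k x) x := by
  have h0 : HasDerivAt (fun y : ℝ => y ^ (α * k)) (α * k * x ^ (α * k - 1)) x :=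
    Real.hasDerivAt_rpow_const (Or.inl hx.ne')
  have h2 := (h0.ofReal_comp.const_mul (a ^ k)).div_const ((Real.Gamma (α * k + 1) : ℝ) : ℂ)
  simpa only [MLe, MLd] using h2

lemma ML_hasDeriv {α : ℝ} (hα0 : 0 < α) (hα1 : α < 1) (a : ℂ) (u : ℝ → ℂ)
    (hu : ∀ τ : ℝ, u τ = mittagLeffler α (a * ((τ ^ α : ℝ) : ℂ)))
    {τ : ℝ} (hτ : 0 < τ) :
    HasDerivAt u (∑' k, MLd α a k τ) τ := by
  apply hasDerivAt_of_tendstoLocallyUniformlyOn isOpen_Ioi (tendstoLU hα0 hα1 a)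
    (f := fun (T : Finset ℕ) x => ∑ k ∈ T, MLe α a k x) ?_ ?_ (mem_Ioi.2 hτ)
  · filter_upwards with T x hx
    exact HasDerivAt.fun_sum fun k _ => MLd_hasDeriv a k (mem_Ioi.1 hx)
  · intro x hx
    rw [hu x, tsum_MLe_eq a (le_of_lt (mem_Ioi.1 hx))]
    exact (summable_MLe hα0 hα1 a (mem_Ioi.1 hx)).hasSum

lemma F_succ_eq (α : ℝ) (a : ℂ) (k : ℕ) (t τ : ℝ) :
    MLd α a (k + 1) τ * (((t - τ) ^ (-α) : ℝ) : ℂ) =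
      (a ^ (k + 1) / ((Real.Gamma (α * ((k : ℝ) + 1) + 1) : ℝ) : ℂ)) *
        (((α * ((k : ℝ) + 1)) * (τ ^ (α * ((k : ℝ) + 1) - 1) * (t - τ) ^ (-α)) : ℝ) : ℂ) := by
  rw [MLd]
  push_cast
  ring

lemma F_succ_integrableOn {α : ℝ} (hα0 : 0 < α) (hα1 : α < 1) (a : ℂ) (k : ℕ) {t : ℝ}
    (ht : 0 < t) :
    IntegrableOn (fun τ : ℝ => MLd α a (k + 1) τ * (((t - τ) ^ (-α) : ℝ) : ℂ))
      (Set.Ioc 0 t) := by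
  have hp : (0:ℝ) < α * ((k : ℝ) + 1) := by positivity
  have hq : (0:ℝ) < 1 - α := by linarith
  have hbeta := beta_r_integrableOn hp hq ht
  rw [show (1 : ℝ) - α - 1 = -α from by ring] at hbeta
  have h1 : IntegrableOn
      (fun τ : ℝ => (α * ((k : ℝ) + 1)) * (τ ^ (α * ((k : ℝ) + 1) - 1) * (t - τ) ^ (-α)))
      (Set.Ioc 0 t) := hbeta.const_mul _
  have h2 : IntegrableOn
      (fun τ : ℝ => (((α * ((k : ℝ) + 1)) * (τ ^ (α * ((k : ℝ) + 1) - 1) * (t - τ) ^ (-α)) : ℝ) : ℂ))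
      (Set.Ioc 0 t) := h1.ofReal
  have h3 : IntegrableOn (fun τ : ℝ =>
      (a ^ (k + 1) / ((Real.Gamma (α * ((k : ℝ) + 1) + 1) : ℝ) : ℂ)) *
        (((α * ((k : ℝ) + 1)) * (τ ^ (α * ((k : ℝ) + 1) - 1) * (t - τ) ^ (-α)) : ℝ) : ℂ))
      (Set.Ioc 0 t) :=
    h2.const_mul (a ^ (k + 1) / ((Real.Gamma (α * ((k : ℝ) + 1) + 1) : ℝ) : ℂ))
  exact h3.congr_fun (fun τ _ => (F_succ_eq α a k t τ).symm) measurableSet_Ioc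

lemma F_norm_eq {α : ℝ} (hα0 : 0 < α) (a : ℂ) (k : ℕ) {t τ : ℝ} (hτ : τ ∈ Set.Ioc 0 t) :
    ‖MLd α a k τ * (((t - τ) ^ (-α) : ℝ) : ℂ)‖ =
      ‖a‖ ^ k * (α * k) / Real.Gamma (α * k + 1) * (τ ^ (α * k - 1) * (t - τ) ^ (-α)) := by
  obtain ⟨hτ0, hτt⟩ := hτ
  have hG : 0 < Real.Gamma (α * k + 1) := Real.Gamma_pos_of_pos (by positivity)
  rw [MLd, norm_mul, norm_div, norm_mul, norm_pow, Complex.norm_real, Complex.norm_real,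
    Complex.norm_real, Real.norm_eq_abs, Real.norm_eq_abs, Real.norm_eq_abs,
    abs_of_nonneg (by positivity : (0:ℝ) ≤ α * k * τ ^ (α * k - 1)),
    abs_of_nonneg hG.le,
    abs_of_nonneg (Real.rpow_nonneg (sub_nonneg.2 hτt) _)]
  ring

lemma F_norm_integral_le {α : ℝ} (hα0 : 0 < α) (hα1 : α < 1) (a : ℂ) (k : ℕ) {t : ℝ}
    (ht : 0 < t) :
    ∫ τ in Set.Ioc 0 t, ‖MLd α a k τ * (((t - τ) ^ (-α) : ℝ) : ℂ)‖ ≤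
      Real.Gamma (1 - α) * t ^ (-α) *
        ((k + 1) * (‖a‖ * t ^ α) ^ k / Real.Gamma (α * k + (1 - α))) := by
  have hq : (0:ℝ) < 1 - α := by linarith
  have hGq : 0 < Real.Gamma (1 - α) := Real.Gamma_pos_of_pos hq
  have hGkq : 0 < Real.Gamma (α * k + (1 - α)) := Real.Gamma_pos_of_pos (by positivity)
  cases k with
  | zero =>
    have : ∫ τ in Set.Ioc 0 t, ‖MLd α a 0 τ * (((t - τ) ^ (-α) : ℝ) : ℂ)‖ = 0 := by
      rw [setIntegral_congr_fun measurableSet_Ioc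
        (fun τ _ => by rw [MLd_zero, zero_mul, norm_zero])]
      simp
    rw [this]
    positivity
  | succ k =>
    have hp : (0:ℝ) < α * ((k : ℝ) + 1) := by positivity
    set p : ℝ := α * ((k : ℝ) + 1) with hpdef
    have hGp : 0 < Real.Gamma p := Real.Gamma_pos_of_pos hp
    have hGpq : 0 < Real.Gamma (p + (1 - α)) := Real.Gamma_pos_of_pos (by positivity)
    have hbv := beta_value hp hq ht
    rw [show (1 : ℝ) - α - 1 = -α from by ring] at hbv
    have hcast : ∀ τ : ℝ, τ ∈ Set.Ioc 0 t →
        ‖MLd α a (k+1) τ * (((t - τ) ^ (-α) : ℝ) : ℂ)‖ =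
        (‖a‖ ^ (k+1) * p / Real.Gamma (p + 1)) * (τ ^ (p - 1) * (t - τ) ^ (-α)) := by
      intro τ hτ
      have := F_norm_eq hα0 a (k+1) hτ
      rw [this, hpdef]
      push_cast
      ring_nf
    rw [setIntegral_congr_fun measurableSet_Ioc hcast, integral_const_mul, hbv]
    have e1 : t ^ (p + (1 - α) - 1) = t ^ p * t ^ (-α) := by
      rw [← Real.rpow_add ht]
      ring_nf
    have hGp1 : Real.Gamma (p + 1) = p * Real.Gamma p := Real.Gamma_add_one hp.ne'
    have key : ‖a‖ ^ (k+1) * p / Real.Gamma (p + 1) *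
        (t ^ (p + (1 - α) - 1) * (Real.Gamma p * Real.Gamma (1 - α) / Real.Gamma (p + (1 - α)))) =
        Real.Gamma (1 - α) * t ^ (-α) * ((‖a‖ * t ^ α) ^ (k+1) / Real.Gamma (p + (1 - α))) := by
      rw [hGp1, e1, mul_pow, ← rpow_mul_nat ht.le α (k+1)]
      have : α * ((k + 1 : ℕ) : ℝ) = p := by push_cast; ring
      rw [this]
      field_simp
    rw [key]
    have hmono : (‖a‖ * t ^ α) ^ (k+1) / Real.Gamma (p + (1 - α)) ≤
        (((k+1 : ℕ) : ℝ) + 1) * (‖a‖ * t ^ α) ^ (k+1) / Real.Gamma (p + (1 - α)) := by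
      apply (div_le_div_iff_of_pos_right hGpq).2
      have h0 : (0:ℝ) ≤ (‖a‖ * t ^ α) ^ (k+1) := by positivity
      nlinarith [Nat.cast_nonneg (α := ℝ) (k+1)]
    calc Real.Gamma (1 - α) * t ^ (-α) * ((‖a‖ * t ^ α) ^ (k+1) / Real.Gamma (p + (1 - α)))
        ≤ Real.Gamma (1 - α) * t ^ (-α) *
          ((((k+1 : ℕ) : ℝ) + 1) * (‖a‖ * t ^ α) ^ (k+1) / Real.Gamma (p + (1 - α))) := by
          apply mul_le_mul_of_nonneg_left hmono (by positivity)
      _ = Real.Gamma (1 - α) * t ^ (-α) *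
          ((((k+1 : ℕ) : ℝ) + 1) * (‖a‖ * t ^ α) ^ (k+1) / Real.Gamma (α * ((k+1 : ℕ) : ℝ) + (1 - α))) := by
          have : α * (((k+1) : ℕ) : ℝ) = p := by push_cast; ring
          rw [this]

lemma F_integral_eq {α : ℝ} (hα0 : 0 < α) (hα1 : α < 1) (a : ℂ) (k : ℕ) {t : ℝ} (ht : 0 < t) :
    ∫ τ in Set.Ioc 0 t, MLd α a (k + 1) τ * (((t - τ) ^ (-α) : ℝ) : ℂ) =
      ((Real.Gamma (1 - α) : ℝ) : ℂ) *
        (a ^ (k + 1) * ((t ^ (α * k) : ℝ) : ℂ) / ((Real.Gamma (α * k + 1) : ℝ) : ℂ)) := by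
  have hp : (0:ℝ) < α * ((k : ℝ) + 1) := by positivity
  have hq : (0:ℝ) < 1 - α := by linarith
  have hGk : 0 < Real.Gamma (α * k + 1) := Real.Gamma_pos_of_pos (by positivity)
  have hGp1 : (0:ℝ) < Real.Gamma (α * ((k : ℝ) + 1) + 1) := Real.Gamma_pos_of_pos (by positivity)
  have hbv := beta_value hp hq ht
  rw [show (1 : ℝ) - α - 1 = -α from by ring] at hbv
  have hval : ∫ τ in Set.Ioc 0 t,
      (α * ((k : ℝ) + 1)) * (τ ^ (α * ((k : ℝ) + 1) - 1) * (t - τ) ^ (-α)) =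
      t ^ (α * (k : ℝ)) *
        (Real.Gamma (α * ((k : ℝ) + 1) + 1) * Real.Gamma (1 - α) / Real.Gamma (α * (k : ℝ) + 1)) := by
    rw [integral_const_mul, hbv,
      show α * ((k : ℝ) + 1) + (1 - α) - 1 = α * (k : ℝ) from by ring,
      show α * ((k : ℝ) + 1) + (1 - α) = α * (k : ℝ) + 1 from by ring,
      Real.Gamma_add_one hp.ne']
    field_simp
  rw [setIntegral_congr_fun measurableSet_Ioc (fun τ _ => F_succ_eq α a k t τ),
    integral_const_mul,
    show (∫ τ in Set.Ioc 0 t,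
        (((α * ((k : ℝ) + 1)) * (τ ^ (α * ((k : ℝ) + 1) - 1) * (t - τ) ^ (-α)) : ℝ) : ℂ)) =
      (((∫ τ in Set.Ioc 0 t,
        (α * ((k : ℝ) + 1)) * (τ ^ (α * ((k : ℝ) + 1) - 1) * (t - τ) ^ (-α)) : ℝ)) : ℂ) from
      integral_ofReal (𝕜 := ℂ),
    hval]
  have hne1 : ((Real.Gamma (α * (k : ℝ) + 1) : ℝ) : ℂ) ≠ 0 := by exact_mod_cast hGk.ne'
  have hne4 : ((Real.Gamma (α * ((k : ℝ) + 1) + 1) : ℝ) : ℂ) ≠ 0 := by exact_mod_cast hGp1.ne'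
  push_cast
  field_simp

/-- The Mittag-Leffler function `u(τ) = E_α(a τ^α)` is differentiable on `(0,∞)`, the Caputo
integrand is integrable on `(0,t)` for every `t > 0`, and `u` is an eigenfunction of the
Caputo fractional derivative of order `α` with eigenvalue `a`:
`(1/Γ(1-α)) ∫₀ᵗ u'(τ)(t-τ)^{-α} dτ = a E_α(a t^α)`. -/
theorem mittagLeffler_eigenfunction_caputo (α : ℝ) (hα0 : 0 < α) (hα1 : α < 1) (a : ℂ)
    (u : ℝ → ℂ) (hu : ∀ τ : ℝ, u τ = mittagLeffler α (a * ((τ ^ α : ℝ) : ℂ))) :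
    ∃ u' : ℝ → ℂ,
      (∀ τ : ℝ, 0 < τ → HasDerivAt u (u' τ) τ) ∧
      ∀ t : ℝ, 0 < t →
        IntegrableOn (fun τ : ℝ => u' τ * (((t - τ) ^ (-α) : ℝ) : ℂ)) (Set.Ioc 0 t) ∧
        (1 / Complex.Gamma ((1 - α : ℝ) : ℂ)) *
            ∫ τ in Set.Ioc (0 : ℝ) t, u' τ * (((t - τ) ^ (-α) : ℝ) : ℂ) =
          a * mittagLeffler α (a * ((t ^ α : ℝ) : ℂ)) := by
  refine ⟨fun τ => ∑' k, MLd α a k τ, fun τ hτ => ML_hasDeriv hα0 hα1 a u hu hτ, ?_⟩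
  intro t ht
  have hq : (0:ℝ) < 1 - α := by linarith
  have hGq : 0 < Real.Gamma (1 - α) := Real.Gamma_pos_of_pos hq
  have hDsum : Summable (fun k : ℕ => Real.Gamma (1 - α) * t ^ (-α) *
      ((k + 1) * (‖a‖ * t ^ α) ^ k / Real.Gamma (α * k + (1 - α)))) :=
    (summable_master hα0 hα1 hq (by positivity)).mul_left _
  have hNsum : Summable (fun k : ℕ =>
      ∫ τ in Set.Ioc 0 t, ‖MLd α a k τ * (((t - τ) ^ (-α) : ℝ) : ℂ)‖) :=
    Summable.of_nonneg_of_le (fun k => integral_nonneg fun τ => norm_nonneg _)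
      (fun k => F_norm_integral_le hα0 hα1 a k ht) hDsum
  have hFint : ∀ k : ℕ,
      IntegrableOn (fun τ : ℝ => MLd α a k τ * (((t - τ) ^ (-α) : ℝ) : ℂ)) (Set.Ioc 0 t) := by
    intro k
    cases k with
    | zero =>
      have h0 : (fun τ : ℝ => MLd α a 0 τ * (((t - τ) ^ (-α) : ℝ) : ℂ)) = fun _ => (0:ℂ) :=
        funext fun τ => by rw [MLd_zero, zero_mul]
      rw [h0]
      exact integrableOn_zero
    | succ k => exact F_succ_integrableOn hα0 hα1 a k ht
  have hu'cont : ContinuousOn (fun x => ∑' k, MLd α a k x) (Set.Ioi 0) := by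
    apply (tendstoLU hα0 hα1 a).continuousOn
    apply Filter.Eventually.frequently
    filter_upwards with T
    apply continuousOn_finset_sum
    intro k _
    have h1 : ContinuousOn (fun x : ℝ => α * k * x ^ (α * k - 1)) (Set.Ioi 0) := by
      apply continuousOn_const.mul
      intro x hx
      exact (Real.continuousAt_rpow_const x _ (Or.inl (ne_of_gt (mem_Ioi.1 hx)))).continuousWithinAt
    have h2 : ContinuousOn (fun x : ℝ => ((α * k * x ^ (α * k - 1) : ℝ) : ℂ)) (Set.Ioi 0) :=
      Complex.continuous_ofReal.comp_continuousOn h1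
    exact (continuousOn_const.mul h2).div_const _
  have hfun : (fun τ : ℝ => (∑' k, MLd α a k τ) * (((t - τ) ^ (-α) : ℝ) : ℂ)) =
      (fun τ : ℝ => ∑' k, MLd α a k τ * (((t - τ) ^ (-α) : ℝ) : ℂ)) :=
    funext fun τ => tsum_mul_right.symm
  have hwcont : ContinuousOn (fun τ : ℝ => (((t - τ) ^ (-α) : ℝ) : ℂ)) (Set.Ioo 0 t) := by
    apply Complex.continuous_ofReal.comp_continuousOn
    intro τ hτ
    have hne : t - τ ≠ 0 := ne_of_gt (by linarith [hτ.2])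
    exact ((Real.continuousAt_rpow_const (t - τ) (-α) (Or.inl hne)).comp
      ((continuous_const.sub continuous_id).continuousAt)).continuousWithinAt
  have hAESM : AEStronglyMeasurable
      (fun τ : ℝ => ∑' k, MLd α a k τ * (((t - τ) ^ (-α) : ℝ) : ℂ))
      (volume.restrict (Set.Ioc 0 t)) := by
    rw [← hfun, ← Measure.restrict_congr_set Ioo_ae_eq_Ioc]
    exact ((hu'cont.mono (fun x hx => mem_Ioi.2 hx.1)).mul hwcont).aestronglyMeasurable
      measurableSet_Ioo
  have hint : IntegrableOn
      (fun τ : ℝ => ∑' k, MLd α a k τ * (((t - τ) ^ (-α) : ℝ) : ℂ)) (Set.Ioc 0 t) :=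
    integrable_tsum_c hAESM hFint hNsum
  constructor
  · rw [show (fun τ : ℝ => (∑' k, MLd α a k τ) * (((t - τ) ^ (-α) : ℝ) : ℂ)) =
      (fun τ : ℝ => ∑' k, MLd α a k τ * (((t - τ) ^ (-α) : ℝ) : ℂ)) from hfun]
    exact hint
  · have hswap := integral_tsum_of_summable_integral_norm hFint hNsum
    have hIsum : Summable (fun k : ℕ =>
        ∫ τ in Set.Ioc 0 t, MLd α a k τ * (((t - τ) ^ (-α) : ℝ) : ℂ)) :=
      Summable.of_norm_bounded hNsum (fun k => norm_integral_le_integral_norm _)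
    have hI0 : (∫ τ in Set.Ioc 0 t, MLd α a 0 τ * (((t - τ) ^ (-α) : ℝ) : ℂ)) = 0 := by
      rw [setIntegral_congr_fun measurableSet_Ioc
        (fun τ _ => by rw [MLd_zero, zero_mul] : Set.EqOn _ (fun _ => (0:ℂ)) _)]
      exact integral_zero _ _
    rw [hfun, ← hswap, hIsum.tsum_eq_zero_add, hI0, zero_add,
      tsum_congr (fun k => F_integral_eq hα0 hα1 a k ht), tsum_mul_left,
      Complex.Gamma_ofReal]
    have hne : ((Real.Gamma (1 - α) : ℝ) : ℂ) ≠ 0 := by exact_mod_cast hGq.ne'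
    rw [one_div, inv_mul_cancel_left₀ hne, tsum_MLe_eq a ht.le, ← tsum_mul_left]
    apply tsum_congr
    intro k
    rw [MLe]
    ring
end

section
/- Let 0 < α ≤ 1, a ∈ ℂ, and let s be a positive real number with s^α > |a|. Then the function t ↦ e^{−st} E_α(a t^α) is integrable on (0, ∞) and ∫_0^∞ e^{−st} E_α(a t^α) dt = s^{α−1} / (s^α − a). (Laplace transform of the Mittag-Leffler function.) -/
open MeasureTheory

section Aux

open ENNReal

lemma integrable_tsum_of_summable_integral_norm'
    {X : Type*} [MeasurableSpace X] {μ : Measure X}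
    {E : Type*} [NormedAddCommGroup E] [CompleteSpace E]
    {F : ℕ → X → E} (hF_int : ∀ i, Integrable (F i) μ)
    (hF_sum : Summable fun i => ∫ a, ‖F i a‖ ∂μ) :
    Integrable (fun a => ∑' i, F i a) μ := by
  have hf : ∀ i, AEStronglyMeasurable (F i) μ := fun i => (hF_int i).1
  have hf' : ∑' i, ∫⁻ a, ‖F i a‖₊ ∂μ ≠ ∞ := by
    have h (i : ℕ) : ∫⁻ a, ‖F i a‖₊ ∂μ = ‖(∫ a, ‖F i a‖ ∂μ)‖₊ := by
      rw [lintegral_coe_eq_integral _ (hF_int i).norm, coe_nnreal_eq, coe_nnnorm,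
        Real.norm_of_nonneg (integral_nonneg (fun a => norm_nonneg (F i a)))]
      simp only [coe_nnnorm]
    rw [funext h, ← ENNReal.coe_tsum]
    · exact coe_ne_top
    · simp_rw [← NNReal.summable_coe, coe_nnnorm]
      exact hF_sum.abs
  have hf'' : ∀ i, AEMeasurable (fun x => (‖F i x‖₊ : ℝ≥0∞)) μ := fun i => (hf i).enorm
  have hhh : ∀ᵐ a ∂μ, Summable fun n => ‖F n a‖ := by
    have h2 := hf'
    rw [← lintegral_tsum hf''] at h2
    refine (ae_lt_top' (AEMeasurable.ennreal_tsum hf'') h2).mono fun x hx => ?_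
    have := ENNReal.tsum_coe_ne_top_iff_summable_coe.mp hx.ne
    simpa [coe_nnnorm] using this
  constructor
  · refine aestronglyMeasurable_of_tendsto_ae Filter.atTop
      (fun n => Finset.aestronglyMeasurable_sum (Finset.range n) fun i _ => hf i) ?_
    filter_upwards [hhh] with x hx
    simp only [Finset.sum_apply]
    exact hx.of_norm.hasSum.tendsto_sum_nat
  · have hb : ∫⁻ a, ‖∑' i, F i a‖₊ ∂μ ≤ ∑' i, ∫⁻ a, ‖F i a‖₊ ∂μ := by
      rw [← lintegral_tsum hf'']
      refine lintegral_mono_ae ?_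
      filter_upwards [hhh] with x hx
      have h1 : Summable fun n => ‖F n x‖₊ := by
        rw [← NNReal.summable_coe]; simpa [coe_nnnorm] using hx
      show (‖∑' i, F i x‖₊ : ℝ≥0∞) ≤ ∑' i, (‖F i x‖₊ : ℝ≥0∞)
      rw [← ENNReal.coe_tsum h1]
      exact ENNReal.coe_le_coe.mpr (nnnorm_tsum_le h1)
    exact lt_of_le_of_lt hb hf'.lt_top

end Aux

/-- Laplace transform of the Mittag-Leffler function: for `0 < α ≤ 1`, `a ∈ ℂ` and real
`s > 0` with `s^α > |a|`, one has `∫₀^∞ e^{-st} E_α(a t^α) dt = s^{α-1}/(s^α - a)`. -/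
theorem laplace_mittagLeffler (α : ℝ) (hα0 : 0 < α) (hα1 : α ≤ 1) (a : ℂ) (s : ℝ)
    (hs : 0 < s) (hsa : ‖a‖ < s ^ α) :
    IntegrableOn (fun t : ℝ => Complex.exp (-(s * t)) * mittagLeffler α (a * ((t ^ α : ℝ) : ℂ)))
      (Set.Ioi 0) ∧
    ∫ t in Set.Ioi (0 : ℝ), Complex.exp (-(s * t)) * mittagLeffler α (a * ((t ^ α : ℝ) : ℂ)) =
      ((s ^ (α - 1) : ℝ) : ℂ) / (((s ^ α : ℝ) : ℂ) - a) := by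
  have hsα : (0:ℝ) < s ^ α := Real.rpow_pos_of_pos hs α
  -- the terms of the series
  set F : ℕ → ℝ → ℂ := fun k t =>
    Complex.exp (-(s * t)) * ((a * ((t ^ α : ℝ) : ℂ)) ^ k / Complex.Gamma ((α * k + 1 : ℝ) : ℂ))
    with hF
  set g : ℕ → ℝ → ℝ := fun k t => t ^ (α * k) * Real.exp (-(s * t)) with hg
  have hΓpos : ∀ k : ℕ, 0 < Real.Gamma (α * k + 1) := fun k =>
    Real.Gamma_pos_of_pos (by positivity)
  set c : ℕ → ℂ := fun k => a ^ k / ((Real.Gamma (α * k + 1) : ℝ) : ℂ) with hc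
  -- pointwise identification on Ioi 0
  have hFeq : ∀ k : ℕ, Set.EqOn (F k) (fun t => c k * ((g k t : ℝ) : ℂ)) (Set.Ioi 0) := by
    intro k t ht
    have ht0 : (0:ℝ) ≤ t := (Set.mem_Ioi.mp ht).le
    have h1 : ((t ^ α : ℝ)) ^ k = t ^ (α * k) := by
      rw [Real.rpow_mul ht0, Real.rpow_natCast]
    simp only [hF, hc, Complex.Gamma_ofReal]
    rw [mul_pow, ← Complex.ofReal_pow, h1]
    have h2 : Complex.exp (-(s * t)) = ((Real.exp (-(s * t)) : ℝ) : ℂ) := by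
      rw [Complex.ofReal_exp]; push_cast; ring_nf
    rw [h2, Complex.ofReal_mul]
    ring
  -- integrability and value of the g-integrals
  have hgint : ∀ k : ℕ, IntegrableOn (g k) (Set.Ioi 0) := by
    intro k
    have hsk : (-1:ℝ) < α * k := by
      have : (0:ℝ) ≤ α * k := by positivity
      linarith
    have := integrableOn_rpow_mul_exp_neg_mul_rpow hsk zero_lt_one hs
    simpa [Real.rpow_one, neg_mul] using this
  have hgval : ∀ k : ℕ, ∫ t in Set.Ioi (0:ℝ), g k t
      = (1 / s) ^ (α * k + 1) * Real.Gamma (α * k + 1) := by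
    intro k
    have := Real.integral_rpow_mul_exp_neg_mul_Ioi (a := α * k + 1) (r := s)
      (by positivity) hs
    simpa [add_sub_cancel_right] using this
  -- integrability of each term
  have hFint : ∀ k : ℕ, Integrable (F k) (volume.restrict (Set.Ioi 0)) := by
    intro k
    exact IntegrableOn.congr_fun ((hgint k).ofReal.const_mul (c k))
      (fun t ht => ((hFeq k) ht).symm) measurableSet_Ioi
  -- norm integrals
  have hnormval : ∀ k : ℕ, ∫ t in Set.Ioi (0:ℝ), ‖F k t‖
      = ‖a‖ ^ k * (1 / s) ^ (α * k + 1) := by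
    intro k
    have h1 : ∫ t in Set.Ioi (0:ℝ), ‖F k t‖
        = ∫ t in Set.Ioi (0:ℝ), (‖a‖ ^ k / Real.Gamma (α * k + 1)) * g k t := by
      refine setIntegral_congr_fun measurableSet_Ioi (fun t ht => ?_)
      have hgnn : 0 ≤ g k t := by
        have := (Set.mem_Ioi.mp ht).le
        simp only [hg]
        positivity
      rw [hFeq k ht]
      simp only [hc, norm_mul, norm_div, norm_pow, Complex.norm_real,
        Real.norm_of_nonneg hgnn, Real.norm_of_nonneg (hΓpos k).le,
        abs_of_nonneg hgnn, abs_of_pos (hΓpos k)]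
    rw [h1, integral_const_mul, hgval k]
    field_simp
  -- summability of the norm integrals
  have hr0 : 0 ≤ ‖a‖ * (s ^ α)⁻¹ := by positivity
  have hr1 : ‖a‖ * (s ^ α)⁻¹ < 1 := by
    rw [mul_inv_lt_iff₀ hsα, one_mul]; exact hsa
  have hcval : ∀ k : ℕ, ‖a‖ ^ k * (1 / s) ^ (α * k + 1)
      = s⁻¹ * (‖a‖ * (s ^ α)⁻¹) ^ k := by
    intro k
    have h1 : (1 / s : ℝ) ^ (α * k + 1) = (1 / s) ^ (α * k) * (1 / s) := by
      rw [Real.rpow_add (by positivity), Real.rpow_one]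
    have h2 : (1 / s : ℝ) ^ (α * k) = ((1 / s) ^ α) ^ k := by
      rw [Real.rpow_mul (by positivity), Real.rpow_natCast]
    have h3 : (1 / s : ℝ) ^ α = (s ^ α)⁻¹ := by
      rw [one_div, Real.inv_rpow hs.le]
    rw [h1, h2, h3, mul_pow, one_div]
    ring
  have hFsum : Summable fun k => ∫ t in Set.Ioi (0:ℝ), ‖F k t‖ := by
    simp_rw [hnormval, hcval]
    exact (summable_geometric_of_lt_one hr0 hr1).mul_left _
  -- identify the integrand with the tsum
  have hfun : (fun t : ℝ => Complex.exp (-(s * t)) * mittagLeffler α (a * ((t ^ α : ℝ) : ℂ)))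
      = fun t => ∑' k, F k t := by
    funext t
    rw [mittagLeffler, ← tsum_mul_left]
  -- a real power identity
  have hpow : ∀ k : ℕ, (1 / s : ℝ) ^ (α * k + 1) = ((s ^ α)⁻¹) ^ k * s⁻¹ := by
    intro k
    have h1 : (1 / s : ℝ) ^ (α * k + 1) = (1 / s) ^ (α * k) * (1 / s) := by
      rw [Real.rpow_add (by positivity), Real.rpow_one]
    have h2 : (1 / s : ℝ) ^ (α * k) = ((1 / s) ^ α) ^ k := by
      rw [Real.rpow_mul (by positivity), Real.rpow_natCast]
    have h3 : (1 / s : ℝ) ^ α = (s ^ α)⁻¹ := by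
      rw [one_div, Real.inv_rpow hs.le]
    rw [h1, h2, h3, one_div]
  -- value of each complex integral
  have hΓC : ∀ k : ℕ, ((Real.Gamma (α * k + 1) : ℝ) : ℂ) ≠ 0 := fun k =>
    Complex.ofReal_ne_zero.mpr (hΓpos k).ne'
  have hIval : ∀ k : ℕ, ∫ t in Set.Ioi (0:ℝ), F k t
      = (s : ℂ)⁻¹ * (a * (((s ^ α : ℝ) : ℂ))⁻¹) ^ k := by
    intro k
    rw [setIntegral_congr_fun measurableSet_Ioi (hFeq k), integral_const_mul]
    rw [show ∫ t in Set.Ioi (0:ℝ), ((g k t : ℝ) : ℂ) = ((∫ t in Set.Ioi (0:ℝ), g k t : ℝ) : ℂ)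
      from integral_ofReal]
    rw [hgval k, hpow k, hc]
    push_cast
    rw [mul_pow]
    field_simp [hΓC k]
  -- put everything together
  have hint : Integrable (fun t => ∑' k, F k t) (volume.restrict (Set.Ioi 0)) :=
    integrable_tsum_of_summable_integral_norm' hFint hFsum
  have hval := hasSum_integral_of_summable_integral_norm hFint hFsum
  have hw : ‖a * (((s ^ α : ℝ) : ℂ))⁻¹‖ < 1 := by
    rw [norm_mul, norm_inv, Complex.norm_real, Real.norm_of_nonneg hsα.le]
    exact hr1
  have hSne : (((s ^ α : ℝ) : ℂ)) ≠ 0 := Complex.ofReal_ne_zero.mpr hsα.ne'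
  have hsne : ((s : ℝ) : ℂ) ≠ 0 := Complex.ofReal_ne_zero.mpr hs.ne'
  have hsub : (((s ^ α : ℝ) : ℂ)) - a ≠ 0 := by
    intro h
    have : a = ((s ^ α : ℝ) : ℂ) := by linear_combination -h
    rw [this] at hsa
    simp [Complex.norm_real, abs_of_pos hsα] at hsa
  constructor
  · rw [IntegrableOn, hfun]
    exact hint
  · rw [hfun, ← hval.tsum_eq]
    simp_rw [hIval]
    rw [tsum_mul_left, tsum_geometric_of_norm_lt_one hw]
    have hkey : ((s ^ (α - 1) : ℝ) : ℂ) = ((s ^ α : ℝ) : ℂ) / ((s : ℝ) : ℂ) := by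
      rw [Real.rpow_sub hs, Real.rpow_one, Complex.ofReal_div]
    rw [hkey]
    field_simp
end

section
/- Let 0 < α < 1 and let f : ℝ → ℂ be differentiable on [0, ∞) with continuous derivative, and suppose there are constants C ≥ 0 and σ ≥ 0 such that |f'(t)| ≤ C e^{σ t} for all t ≥ 0. Then for every real s > σ, ∫_0^∞ e^{−st} [(1/Γ(1−α)) ∫_0^t f'(τ)(t−τ)^{−α} dτ] dt = s^α F(s) − s^{α−1} f(0), where F(s) = ∫_0^∞ e^{−st} f(t) dt. (Laplace transform of the Caputo fractional derivative.) -/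
open MeasureTheory Set Filter

private lemma laplace_ker_aux (α s : ℝ) (hα0 : 0 < α) (hα1 : α < 1) (hs0 : 0 < s) (τ : ℝ) :
    ∫ t in Ioi τ, Complex.exp (-(s*t)) * (((t - τ) ^ (-α) : ℝ) : ℂ)
      = Complex.exp (-(s*τ)) * ((Real.Gamma (1-α) * s^(α-1) : ℝ) : ℂ) := by
  have h1α : 0 < 1 - α := by linarith
  have hR : ∫ u in Ioi (0:ℝ), Real.exp (-(s*u)) * u ^ (-α) = Real.Gamma (1-α) * s^(α-1) := by
    have h := Real.integral_rpow_mul_exp_neg_mul_Ioi h1α hs0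
    have h2 : ∀ u : ℝ, u ^ ((1-α)-1) * Real.exp (-(s*u)) = Real.exp (-(s*u)) * u ^ (-α) := by
      intro u; rw [mul_comm]; norm_num
    rw [← setIntegral_congr_fun measurableSet_Ioi (fun u _ => h2 u), h,
      one_div, Real.inv_rpow hs0.le, ← Real.rpow_neg hs0.le]
    rw [mul_comm]; norm_num
  have hmp := (measurePreserving_add_right volume τ).setIntegral_preimage_emb
    (measurableEmbedding_addRight τ) (fun t => Complex.exp (-(s*t)) * (((t - τ) ^ (-α) : ℝ) : ℂ)) (Ioi τ)
  have hpre : (fun x : ℝ => x + τ) ⁻¹' Ioi τ = Ioi 0 := by ext x; simp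
  rw [hpre] at hmp
  rw [← hmp]
  have h1 : ∀ x ∈ Ioi (0:ℝ), Complex.exp (-((s:ℂ)*((x+τ:ℝ):ℂ))) * (((x + τ - τ) ^ (-α) : ℝ) : ℂ)
      = Complex.exp (-(s*τ)) * ((Real.exp (-(s*x)) * x ^ (-α) : ℝ) : ℂ) := by
    intro x _
    have h0 : ((x + τ - τ) : ℝ) = x := by ring
    rw [h0]
    push_cast [Complex.ofReal_exp]
    rw [← mul_assoc, ← Complex.exp_add]
    congr 2
    ring
  refine Eq.trans (setIntegral_congr_fun measurableSet_Ioi h1) ?_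
  rw [integral_const_mul]
  congr 1
  have h2 : (∫ (a:ℝ) in Ioi 0, ((Real.exp (-(s*a)) * a ^ (-α) : ℝ):ℂ))
      = ((∫ a in Ioi 0, Real.exp (-(s*a)) * a ^ (-α) : ℝ) : ℂ) := integral_ofReal
  rw [h2, hR]

private lemma laplace_ibp_aux (f f' : ℝ → ℂ) (C σ : ℝ) (hC : 0 ≤ C) (hσ : 0 ≤ σ)
    (hderiv : ∀ t ∈ Set.Ici (0:ℝ), HasDerivWithinAt f (f' t) (Set.Ici 0) t)
    (hcont : ContinuousOn f' (Set.Ici 0))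
    (hbound : ∀ t : ℝ, 0 ≤ t → ‖f' t‖ ≤ C * Real.exp (σ * t))
    (s : ℝ) (hs : σ < s) :
    ∫ τ in Ioi (0:ℝ), Complex.exp (-(s*τ)) * f' τ
      = (s:ℂ) * (∫ t in Ioi (0:ℝ), Complex.exp (-(s*t)) * f t) - f 0 := by
  have hs0 : 0 < s := lt_of_le_of_lt hσ hs
  have hb : 0 < s - σ := sub_pos.2 hs
  have hfc : ContinuousOn f (Ici 0) := fun x hx => (hderiv x hx).continuousWithinAt
  have hnormE : ∀ t : ℝ, ‖Complex.exp (-((s:ℂ)*(t:ℂ)))‖ = Real.exp (-(s*t)) := by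
    intro t
    rw [Complex.norm_exp]
    norm_num
  have hexpadd : ∀ t : ℝ, Real.exp (-(s*t)) * Real.exp (σ*t) = Real.exp (-((s-σ)*t)) := by
    intro t; rw [← Real.exp_add]; ring_nf
  -- bound on f
  have hfb : ∀ t : ℝ, 0 ≤ t → ‖f t‖ ≤ ‖f 0‖ + C * Real.exp (σ*t) * t := by
    intro t ht
    have hftc : ∫ τ in (0:ℝ)..t, f' τ = f t - f 0 := by
      refine intervalIntegral.integral_eq_sub_of_hasDeriv_right_of_le ht
        (hfc.mono (Icc_subset_Ici_self)) (fun x hx => (hderiv x (le_of_lt hx.1)).mono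
          (Ioi_subset_Ici hx.1.le)) ?_
      refine (hcont.mono ?_).intervalIntegrable
      rw [uIcc_of_le ht]; exact Icc_subset_Ici_self
    have h1 : ‖f t - f 0‖ ≤ C * Real.exp (σ*t) * t := by
      rw [← hftc]
      have h2 := intervalIntegral.norm_integral_le_of_norm_le_const
        (C := C * Real.exp (σ*t)) (f := f') (a := 0) (b := t) ?_
      · calc ‖∫ τ in (0:ℝ)..t, f' τ‖ ≤ C * Real.exp (σ*t) * |t - 0| := h2
          _ = C * Real.exp (σ*t) * t := by rw [sub_zero, abs_of_nonneg ht]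
      · intro x hx
        rw [uIoc_of_le ht] at hx
        calc ‖f' x‖ ≤ C * Real.exp (σ*x) := hbound x hx.1.le
          _ ≤ C * Real.exp (σ*t) := by
            apply mul_le_mul_of_nonneg_left (Real.exp_le_exp.2 ?_) hC
            exact mul_le_mul_of_nonneg_left hx.2 hσ
    calc ‖f t‖ = ‖f 0 + (f t - f 0)‖ := by ring_nf
      _ ≤ ‖f 0‖ + ‖f t - f 0‖ := norm_add_le _ _
      _ ≤ ‖f 0‖ + C * Real.exp (σ*t) * t := by linarith
  have Econt : Continuous fun t : ℝ => Complex.exp (-((s:ℂ)*(t:ℂ))) := by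
    continuity
  have hexpint : ∀ b:ℝ, 0 < b → IntegrableOn (fun t : ℝ => Real.exp (-(b*t))) (Ioi 0) :=
    fun b hb0 => (exp_neg_integrableOn_Ioi 0 hb0).congr_fun
      (fun x _ => by beta_reduce; rw [neg_mul]) measurableSet_Ioi
  -- integrability of t * exp (-(s-σ)t)
  have hte : IntegrableOn (fun t : ℝ => t * Real.exp (-((s-σ)*t))) (Ioi 0) := by
    have h := integrableOn_rpow_mul_exp_neg_mul_rpow (by norm_num : (-1:ℝ) < 1) zero_lt_one hb
    refine h.congr_fun (fun x hx => ?_) measurableSet_Ioi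
    beta_reduce; rw [Real.rpow_one, neg_mul]
  have hFint : IntegrableOn (fun t : ℝ => Complex.exp (-(s*t)) * f t) (Ioi 0) := by
    refine Integrable.mono'
      (((hexpint s hs0).const_mul ‖f 0‖).add (hte.const_mul C)) ?_ ?_
    · exact ((Econt.continuousOn.mul (hfc.mono Ioi_subset_Ici_self)).aestronglyMeasurable
        measurableSet_Ioi)
    · filter_upwards [ae_restrict_mem measurableSet_Ioi] with t ht
      simp only [Pi.add_apply]
      rw [norm_mul, hnormE t]
      calc Real.exp (-(s*t)) * ‖f t‖ ≤ Real.exp (-(s*t)) * (‖f 0‖ + C * Real.exp (σ*t) * t) := by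
            exact mul_le_mul_of_nonneg_left (hfb t (le_of_lt ht)) (Real.exp_nonneg _)
        _ = ‖f 0‖ * Real.exp (-(s*t)) + C * (t * Real.exp (-((s-σ)*t))) := by
            rw [← hexpadd t]; ring
  have hF'int : IntegrableOn (fun t : ℝ => Complex.exp (-(s*t)) * f' t) (Ioi 0) := by
    refine Integrable.mono' ((hexpint (s-σ) hb).const_mul C) ?_ ?_
    · exact ((Econt.continuousOn.mul (hcont.mono Ioi_subset_Ici_self)).aestronglyMeasurable
        measurableSet_Ioi)
    · filter_upwards [ae_restrict_mem measurableSet_Ioi] with t ht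
      rw [norm_mul, hnormE t]
      calc Real.exp (-(s*t)) * ‖f' t‖ ≤ Real.exp (-(s*t)) * (C * Real.exp (σ*t)) := by
            exact mul_le_mul_of_nonneg_left (hbound t (le_of_lt ht)) (Real.exp_nonneg _)
        _ = C * Real.exp (-((s-σ)*t)) := by rw [← hexpadd t]; ring
  -- derivative of G
  set G : ℝ → ℂ := fun t => Complex.exp (-(s*t)) * f t with hG
  have hGderiv : ∀ x ∈ Ioi (0:ℝ), HasDerivAt G
      (Complex.exp (-(s*x)) * f' x + (-(s:ℂ)) * (Complex.exp (-(s*x)) * f x)) x := by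
    intro x hx
    have hf : HasDerivAt f (f' x) x := (hderiv x (Set.mem_Ici.2 (le_of_lt hx))).hasDerivAt (Ici_mem_nhds hx)
    have h1 : HasDerivAt (fun t : ℝ => -(s*t)) (-s) x := by
      simpa using ((hasDerivAt_id x).const_mul s).fun_neg
    have h2 := h1.ofReal_comp
    have h3 := h2.cexp
    have hE : HasDerivAt (fun t : ℝ => Complex.exp (-((s:ℂ)*(t:ℂ))))
        (Complex.exp (-((s:ℂ)*(x:ℂ))) * (-(s:ℂ))) x := by
      convert h3 using 2 <;> push_cast <;> ring
    have h4 := hE.fun_mul hf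
    exact h4.congr_deriv (by ring)
  have hGcont : ContinuousWithinAt G (Ici 0) 0 :=
    (Econt.continuousWithinAt).mul (hfc 0 self_mem_Ici)
  have htend1 : Tendsto (fun t : ℝ => Real.exp (-(s*t))) atTop (nhds 0) := by
    have := Real.tendsto_exp_neg_atTop_nhds_zero.comp (tendsto_id.const_mul_atTop hs0)
    exact this.congr (fun t => by simp [Function.comp])
  have htend2 : Tendsto (fun t : ℝ => t * Real.exp (-((s-σ)*t))) atTop (nhds 0) := by
    have h := Real.tendsto_pow_mul_exp_neg_atTop_nhds_zero 1
    have h2 := h.comp (tendsto_id.const_mul_atTop hb)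
    have h3 := h2.const_mul (1/(s-σ))
    rw [mul_zero] at h3
    refine h3.congr (fun t => ?_)
    simp only [Function.comp, pow_one, Function.id_def]
    field_simp
  have hGtend : Tendsto G atTop (nhds 0) := by
    have hgt : Tendsto (fun t : ℝ => ‖f 0‖ * Real.exp (-(s*t)) + C * (t * Real.exp (-((s-σ)*t))))
        atTop (nhds 0) := by
      simpa using (htend1.const_mul ‖f 0‖).add (htend2.const_mul C)
    refine squeeze_zero_norm' ?_ hgt
    · filter_upwards [eventually_ge_atTop (0:ℝ)] with t ht
      rw [hG]
      simp only
      rw [norm_mul, hnormE t]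
      calc Real.exp (-(s*t)) * ‖f t‖ ≤ Real.exp (-(s*t)) * (‖f 0‖ + C * Real.exp (σ*t) * t) :=
            mul_le_mul_of_nonneg_left (hfb t ht) (Real.exp_nonneg _)
        _ = ‖f 0‖ * Real.exp (-(s*t)) + C * (t * Real.exp (-((s-σ)*t))) := by
            rw [← hexpadd t]; ring
  have hG'int : IntegrableOn (fun x : ℝ =>
      Complex.exp (-(s*x)) * f' x + (-(s:ℂ)) * (Complex.exp (-(s*x)) * f x)) (Ioi 0) :=
    hF'int.add (hFint.const_mul _)
  have hIBP := integral_Ioi_of_hasDerivAt_of_tendsto hGcont hGderiv hG'int hGtend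
  rw [integral_add hF'int (hFint.const_mul _), integral_const_mul] at hIBP
  have hG0 : G 0 = f 0 := by
    rw [hG]; simp
  rw [hG0] at hIBP
  linear_combination hIBP

private lemma laplace_fubini_aux (α : ℝ) (hα0 : 0 < α) (hα1 : α < 1)
    (g : ℝ → ℂ) (C σ : ℝ) (hC : 0 ≤ C) (hσ : 0 ≤ σ)
    (hgcont : Continuous g)
    (hgbound : ∀ t : ℝ, 0 ≤ t → ‖g t‖ ≤ C * Real.exp (σ * t))
    (s : ℝ) (hs : σ < s)
    (hkerC : ∀ τ : ℝ, ∫ t in Ioi τ, Complex.exp (-(s*t)) * (((t - τ) ^ (-α) : ℝ) : ℂ)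
      = Complex.exp (-(s*τ)) * ((Real.Gamma (1-α) * s^(α-1) : ℝ) : ℂ)) :
    ∫ t in Ioi (0:ℝ), ∫ τ in Ioc (0:ℝ) t, Complex.exp (-(s*t)) * (g τ * (((t - τ) ^ (-α) : ℝ) : ℂ))
      = ((Real.Gamma (1-α) * s^(α-1) : ℝ) : ℂ) * ∫ τ in Ioi (0:ℝ), Complex.exp (-(s*τ)) * g τ := by
  have hs0 : 0 < s := lt_of_le_of_lt hσ hs
  have hb : 0 < s - σ := sub_pos.2 hs
  have h1α : 0 < 1 - α := by linarith
  have hexpadd : ∀ t : ℝ, Real.exp (-(s*t)) * Real.exp (σ*t) = Real.exp (-((s-σ)*t)) := by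
    intro t; rw [← Real.exp_add]; ring_nf
  have hnormE : ∀ t : ℝ, ‖Complex.exp (-((s:ℂ)*(t:ℂ)))‖ = Real.exp (-(s*t)) := by
    intro t
    rw [Complex.norm_exp]
    norm_num
  set μ : Measure ℝ := volume.restrict (Ioi (0:ℝ)) with hμ
  set K : ℝ × ℝ → ℂ :=
    fun p => Complex.exp (-(s*p.1)) * (g p.2 * (((p.1 - p.2) ^ (-α) : ℝ) : ℂ)) with hK
  set T : Set (ℝ × ℝ) := {p : ℝ × ℝ | p.2 < p.1} with hT
  set Q : ℝ × ℝ → ℂ := T.indicator K with hQ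
  have hTm : MeasurableSet T := measurableSet_lt measurable_snd measurable_fst
  have hKm : Measurable K := by
    refine Measurable.mul ?_ (Measurable.mul ?_ ?_)
    · exact ((measurable_const.mul (Complex.measurable_ofReal.comp measurable_fst)).neg).cexp
    · exact hgcont.measurable.comp measurable_snd
    · exact Complex.measurable_ofReal.comp ((measurable_fst.sub measurable_snd).pow measurable_const)
  have hQm : AEStronglyMeasurable Q (μ.prod μ) := (hKm.indicator hTm).aestronglyMeasurable
  -- the t-section of Q
  have hsec : ∀ t : ℝ, (fun τ => Q (t, τ)) = (Iio t).indicator (fun τ => K (t, τ)) := by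
    intro t; funext τ
    rw [hQ]
    by_cases h : τ < t
    · rw [Set.indicator_of_mem (by exact h : (t,τ) ∈ T), Set.indicator_of_mem (by exact h)]
    · rw [Set.indicator_of_notMem (by exact h : ¬ (t,τ) ∈ T), Set.indicator_of_notMem (by exact h)]
  have hIio : ∀ t : ℝ, Iio t ∩ Ioi 0 = Ioo 0 t := by
    intro t; ext x; simp [and_comm]
  -- integrability of the rpow kernel on sections
  have hrint : ∀ t : ℝ, 0 < t → IntegrableOn (fun τ : ℝ => (t - τ)^(-α)) (Ioo 0 t) := by
    intro t ht
    have h1 : IntervalIntegrable (fun x : ℝ => x ^ (-α)) volume 0 t :=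
      intervalIntegral.intervalIntegrable_rpow' (by linarith)
    have h2 := h1.comp_sub_left t
    rw [intervalIntegrable_iff] at h2
    have h3 : IntegrableOn (fun τ : ℝ => (t - τ)^(-α)) (uIoc (t - 0) (t - t)) := h2
    refine (h3.mono_set ?_)
    rw [sub_zero, sub_self, uIoc_of_ge ht.le]
    exact Ioo_subset_Ioc_self
  -- value of the rpow kernel integral
  have hIval : ∀ t : ℝ, 0 < t → ∫ τ in Ioo 0 t, (t-τ)^(-α) = t^(1-α)/(1-α) := by
    intro t ht
    rw [← integral_Ioc_eq_integral_Ioo, ← intervalIntegral.integral_of_le ht.le]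
    rw [intervalIntegral.integral_comp_sub_left (fun x : ℝ => x ^ (-α)) t]
    rw [sub_self, sub_zero, integral_rpow (Or.inl (by linarith))]
    rw [Real.zero_rpow (by linarith), sub_zero, neg_add_eq_sub]
  -- section integrability
  have ha : ∀ t : ℝ, 0 < t → Integrable (fun τ => Q (t, τ)) μ := by
    intro t ht
    rw [hsec t, hμ, integrable_indicator_iff measurableSet_Iio, IntegrableOn,
      Measure.restrict_restrict measurableSet_Iio, hIio t]
    refine Integrable.mono'
      ((hrint t ht).const_mul (Real.exp (-(s*t)) * (C * Real.exp (σ*t)))) ?_ ?_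
    · exact (hKm.comp measurable_prodMk_left).aestronglyMeasurable
    · filter_upwards [ae_restrict_mem measurableSet_Ioo] with τ hτ
      have htτ : (0:ℝ) ≤ t - τ := by linarith [hτ.2]
      have hrpos : (0:ℝ) ≤ (t - τ)^(-α) := Real.rpow_nonneg htτ _
      rw [hK]
      simp only [norm_mul, hnormE t, Complex.norm_real, Real.norm_eq_abs, abs_of_nonneg hrpos]
      have h5 : ‖g τ‖ ≤ C * Real.exp (σ*t) := by
        calc ‖g τ‖ ≤ C * Real.exp (σ*τ) := hgbound τ hτ.1.le
          _ ≤ C * Real.exp (σ*t) := by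
            apply mul_le_mul_of_nonneg_left (Real.exp_le_exp.2 ?_) hC
            exact mul_le_mul_of_nonneg_left hτ.2.le hσ
      calc Real.exp (-(s*t)) * (‖g τ‖ * (t-τ)^(-α))
          ≤ Real.exp (-(s*t)) * ((C * Real.exp (σ*t)) * (t-τ)^(-α)) := by
            apply mul_le_mul_of_nonneg_left _ (Real.exp_nonneg _)
            exact mul_le_mul_of_nonneg_right h5 hrpos
        _ = Real.exp (-(s*t)) * (C * Real.exp (σ*t)) * (t-τ)^(-α) := by ring
  -- norm integral bound
  have hnormint : ∀ t : ℝ, 0 < t →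
      ∫ τ, ‖Q (t, τ)‖ ∂μ ≤ (C/(1-α)) * (t^(1-α) * Real.exp (-((s-σ)*t))) := by
    intro t ht
    have h0 : (fun τ => ‖Q (t, τ)‖) = (Iio t).indicator (fun τ => ‖K (t, τ)‖) := by
      funext τ
      rw [congrFun (hsec t) τ, norm_indicator_eq_indicator_norm]
    rw [h0, hμ, integral_indicator measurableSet_Iio,
      Measure.restrict_restrict measurableSet_Iio, hIio t]
    have hle : ∫ τ in Ioo 0 t, ‖K (t, τ)‖
        ≤ ∫ τ in Ioo 0 t, (Real.exp (-(s*t)) * (C * Real.exp (σ*t))) * (t-τ)^(-α) := by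
      refine setIntegral_mono_on ?_ ((hrint t ht).const_mul _) measurableSet_Ioo ?_
      · have h6 := ha t ht
        rw [hsec t, hμ, integrable_indicator_iff measurableSet_Iio, IntegrableOn,
          Measure.restrict_restrict measurableSet_Iio, hIio t] at h6
        exact h6.norm
      · intro τ hτ
        have htτ : (0:ℝ) ≤ t - τ := by linarith [hτ.2]
        have hrpos : (0:ℝ) ≤ (t - τ)^(-α) := Real.rpow_nonneg htτ _
        rw [hK]
        simp only [norm_mul, hnormE t, Complex.norm_real, Real.norm_eq_abs, abs_of_nonneg hrpos]
        have h5 : ‖g τ‖ ≤ C * Real.exp (σ*t) := by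
          calc ‖g τ‖ ≤ C * Real.exp (σ*τ) := hgbound τ hτ.1.le
            _ ≤ C * Real.exp (σ*t) := by
              apply mul_le_mul_of_nonneg_left (Real.exp_le_exp.2 ?_) hC
              exact mul_le_mul_of_nonneg_left hτ.2.le hσ
        calc Real.exp (-(s*t)) * (‖g τ‖ * (t-τ)^(-α))
            ≤ Real.exp (-(s*t)) * ((C * Real.exp (σ*t)) * (t-τ)^(-α)) := by
              apply mul_le_mul_of_nonneg_left _ (Real.exp_nonneg _)
              exact mul_le_mul_of_nonneg_right h5 hrpos
          _ = Real.exp (-(s*t)) * (C * Real.exp (σ*t)) * (t-τ)^(-α) := by ring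
    refine le_trans hle ?_
    rw [integral_const_mul, hIval t ht, ← hexpadd t]
    exact le_of_eq (by ring)
  -- b) integrability of the norm integral
  have hbint : Integrable (fun t => ∫ τ, ‖Q (t, τ)‖ ∂μ) μ := by
    have hBint : IntegrableOn (fun t : ℝ => (C/(1-α)) * (t^(1-α) * Real.exp (-((s-σ)*t)))) (Ioi 0) := by
      have h := integrableOn_rpow_mul_exp_neg_mul_rpow (by linarith : (-1:ℝ) < 1-α) zero_lt_one hb
      have h2 : IntegrableOn (fun t : ℝ => t^(1-α) * Real.exp (-((s-σ)*t))) (Ioi 0) := by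
        refine h.congr_fun (fun x hx => ?_) measurableSet_Ioi
        beta_reduce; rw [Real.rpow_one, neg_mul]
      exact h2.const_mul _
    refine Integrable.mono' hBint (hQm.norm.integral_prod_right') ?_
    filter_upwards [ae_restrict_mem measurableSet_Ioi] with t ht
    rw [Real.norm_of_nonneg (integral_nonneg (fun τ => norm_nonneg _))]
    exact hnormint t ht
  -- product integrability
  have hprod : Integrable Q (μ.prod μ) := by
    refine (integrable_prod_iff hQm).2 ⟨?_, hbint⟩
    filter_upwards [ae_restrict_mem measurableSet_Ioi] with t ht
    exact ha t ht
  -- Fubini swap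
  have hswap : ∫ t, (∫ τ, Q (t, τ) ∂μ) ∂μ = ∫ τ, (∫ t, Q (t, τ) ∂μ) ∂μ := by
    exact integral_integral_swap (f := fun t τ => Q (t, τ)) hprod
  -- identify LHS
  have hlhs : ∫ t in Ioi (0:ℝ), ∫ τ in Ioc (0:ℝ) t,
      Complex.exp (-(s*t)) * (g τ * (((t - τ) ^ (-α) : ℝ) : ℂ)) = ∫ t, (∫ τ, Q (t, τ) ∂μ) ∂μ := by
    refine setIntegral_congr_fun measurableSet_Ioi (fun t ht => ?_)
    rw [hsec t, hμ, integral_indicator measurableSet_Iio,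
      Measure.restrict_restrict measurableSet_Iio, hIio t, ← integral_Ioc_eq_integral_Ioo]
  -- identify RHS sections
  have hrhs : ∀ τ : ℝ, 0 < τ → ∫ t, Q (t, τ) ∂μ
      = g τ * (Complex.exp (-(s*τ)) * ((Real.Gamma (1-α) * s^(α-1) : ℝ) : ℂ)) := by
    intro τ hτ
    have hsec2 : (fun t => Q (t, τ)) = (Ioi τ).indicator (fun t => K (t, τ)) := by
      funext t
      rw [hQ]
      by_cases h : τ < t
      · rw [Set.indicator_of_mem (by exact h : (t,τ) ∈ T), Set.indicator_of_mem (by exact h)]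
      · rw [Set.indicator_of_notMem (by exact h : ¬ (t,τ) ∈ T), Set.indicator_of_notMem (by exact h)]
    rw [hsec2, hμ, integral_indicator measurableSet_Ioi,
      Measure.restrict_restrict measurableSet_Ioi]
    have h7 : Ioi τ ∩ Ioi 0 = Ioi τ := by
      rw [Ioi_inter_Ioi, max_eq_left hτ.le]
    rw [h7]
    have h8 : ∀ t ∈ Ioi τ, K (t, τ) = g τ * (Complex.exp (-(s*t)) * (((t - τ) ^ (-α) : ℝ) : ℂ)) := by
      intro t _
      rw [hK]; ring
    rw [setIntegral_congr_fun measurableSet_Ioi h8, integral_const_mul, hkerC τ]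
  rw [hlhs, hswap]
  have h9 : ∀ τ ∈ Ioi (0:ℝ), (∫ t, Q (t, τ) ∂μ)
      = ((Real.Gamma (1-α) * s^(α-1) : ℝ) : ℂ) * (Complex.exp (-(s*τ)) * g τ) := by
    intro τ hτ
    rw [hrhs τ hτ]; ring
  rw [hμ]
  rw [setIntegral_congr_fun measurableSet_Ioi h9, integral_const_mul]

/-- Laplace transform of the Caputo fractional derivative: if `f` is differentiable on `[0,∞)`
with continuous derivative of at most exponential growth `|f'(t)| ≤ C e^{σt}`, then for `s > σ`,
`∫₀^∞ e^{-st} (∂_t^α f)(t) dt = s^α F(s) - s^{α-1} f(0)`, where `F(s) = ∫₀^∞ e^{-st} f(t) dt`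
and `(∂_t^α f)(t) = (1/Γ(1-α)) ∫₀ᵗ f'(τ)(t-τ)^{-α} dτ`. -/
theorem laplace_caputo_derivative (α : ℝ) (hα0 : 0 < α) (hα1 : α < 1)
    (f f' : ℝ → ℂ) (C σ : ℝ) (hC : 0 ≤ C) (hσ : 0 ≤ σ)
    (hderiv : ∀ t ∈ Set.Ici (0 : ℝ), HasDerivWithinAt f (f' t) (Set.Ici 0) t)
    (hcont : ContinuousOn f' (Set.Ici 0))
    (hbound : ∀ t : ℝ, 0 ≤ t → ‖f' t‖ ≤ C * Real.exp (σ * t))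
    (s : ℝ) (hs : σ < s) :
    ∫ t in Set.Ioi (0 : ℝ), Complex.exp (-(s * t)) *
        ((1 / Complex.Gamma ((1 - α : ℝ) : ℂ)) *
          ∫ τ in Set.Ioc (0 : ℝ) t, f' τ * (((t - τ) ^ (-α) : ℝ) : ℂ)) =
      ((s ^ α : ℝ) : ℂ) * (∫ t in Set.Ioi (0 : ℝ), Complex.exp (-(s * t)) * f t) -
        ((s ^ (α - 1) : ℝ) : ℂ) * f 0 := by
  have hs0 : 0 < s := lt_of_le_of_lt hσ hs
  have h1α : 0 < 1 - α := by linarith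
  set g : ℝ → ℂ := fun τ => f' (max τ 0) with hg
  have hgcont : Continuous g :=
    hcont.comp_continuous (continuous_id.max continuous_const) (fun x => Set.mem_Ici.2 (le_max_right _ _))
  have hgeq : ∀ τ : ℝ, 0 ≤ τ → g τ = f' τ := by
    intro τ hτ; rw [hg]; simp only; rw [max_eq_left hτ]
  have hgbound : ∀ τ : ℝ, 0 ≤ τ → ‖g τ‖ ≤ C * Real.exp (σ * τ) := by
    intro τ hτ; rw [hgeq τ hτ]; exact hbound τ hτ
  have hkerC := laplace_ker_aux α s hα0 hα1 hs0
  have hFub := laplace_fubini_aux α hα0 hα1 g C σ hC hσ hgcont hgbound s hs hkerC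
  have hIBP := laplace_ibp_aux f f' C σ hC hσ hderiv hcont hbound s hs
  have hgam : Complex.Gamma ((1 - α : ℝ) : ℂ) = ((Real.Gamma (1-α) : ℝ) : ℂ) :=
    Complex.Gamma_ofReal _
  have hΓne : (Real.Gamma (1-α) : ℝ) ≠ 0 := (Real.Gamma_pos_of_pos h1α).ne'
  have hstep1 : ∫ t in Ioi (0:ℝ), Complex.exp (-(s * t)) *
        ((1 / Complex.Gamma ((1 - α : ℝ) : ℂ)) *
          ∫ τ in Ioc (0:ℝ) t, f' τ * (((t - τ) ^ (-α) : ℝ) : ℂ))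
      = ∫ t in Ioi (0:ℝ), (1 / Complex.Gamma ((1 - α : ℝ) : ℂ)) *
          ∫ τ in Ioc (0:ℝ) t, Complex.exp (-(s*t)) * (g τ * (((t - τ) ^ (-α) : ℝ) : ℂ)) := by
    refine setIntegral_congr_fun measurableSet_Ioi (fun t ht => ?_)
    have h1 : ∫ τ in Ioc (0:ℝ) t, Complex.exp (-(s*t)) * (g τ * (((t - τ) ^ (-α) : ℝ) : ℂ))
        = ∫ τ in Ioc (0:ℝ) t, Complex.exp (-(s*t)) * (f' τ * (((t - τ) ^ (-α) : ℝ) : ℂ)) := by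
      refine setIntegral_congr_fun measurableSet_Ioc (fun τ hτ => ?_)
      rw [hgeq τ hτ.1.le]
    rw [h1, integral_const_mul]
    ring
  have hswap : ∫ τ in Ioi (0:ℝ), Complex.exp (-(s*τ)) * g τ
      = ∫ τ in Ioi (0:ℝ), Complex.exp (-(s*τ)) * f' τ := by
    refine setIntegral_congr_fun measurableSet_Ioi (fun τ hτ => ?_)
    rw [hgeq τ (le_of_lt hτ)]
  rw [hstep1, integral_const_mul, hFub, hswap, hIBP, hgam]
  have hsa : (s:ℝ)^α = s^(α-1) * s := by
    rw [← Real.rpow_add_one hs0.ne' (α-1), sub_add_cancel]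
  rw [hsa]
  push_cast
  field_simp
  rw [div_eq_iff (Complex.ofReal_ne_zero.mpr hΓne)]
  ring
end

section
/- Let 0 < μ < 1, let l be a real number and t > 0. Then the Caputo fractional derivative of order μ of the exponential τ ↦ e^{ilτ} at t satisfies (1/Γ(1−μ)) ∫_0^t (il) e^{ilτ} (t−τ)^{−μ} dτ = i l · t^{1−μ} · E_{1,2−μ}(i l t). -/
open MeasureTheory

/-- Two-parameter Mittag-Leffler function `E_{α,β}(z) = ∑ₖ zᵏ / Γ(αk+β)`. -/
noncomputable def mittagLeffler2 (α β : ℝ) (z : ℂ) : ℂ :=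
  ∑' k : ℕ, z ^ k / Complex.Gamma ((α * k + β : ℝ) : ℂ)

lemma aux_intervalIntegrable {μ : ℝ} (hμ0 : 0 < μ) (hμ1 : μ < 1) (t : ℝ) (k : ℕ) :
    IntervalIntegrable (fun τ => τ ^ k * (t - τ) ^ (-μ)) volume 0 t := by
  have h2 : IntervalIntegrable (fun τ : ℝ => (t - τ) ^ (-μ)) volume 0 t := by
    simpa using ((intervalIntegral.intervalIntegrable_rpow' (a := 0) (b := t) (r := -μ)
      (by linarith)).comp_sub_left t).symm
  exact h2.continuousOn_mul ((continuous_pow k).continuousOn)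

lemma aux_subst {μ t : ℝ} (ht : 0 < t) (k : ℕ) :
    ∫ τ in (0:ℝ)..t, τ ^ k * (t - τ) ^ (-μ)
      = t ^ ((k:ℝ) + 1 - μ) * ∫ x in (0:ℝ)..1, x ^ k * (1 - x) ^ (-μ) := by
  have h := intervalIntegral.smul_integral_comp_mul_right (a := 0) (b := 1)
    (fun τ => τ ^ k * (t - τ) ^ (-μ)) t
  simp only [zero_mul, one_mul, smul_eq_mul] at h
  rw [← h]
  have hcongr : ∀ x ∈ Set.uIcc (0:ℝ) 1,
      (x * t) ^ k * (t - x * t) ^ (-μ)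
        = (t ^ k * t ^ (-μ)) * (x ^ k * (1 - x) ^ (-μ)) := by
    intro x hx
    rw [Set.uIcc_of_le (by norm_num)] at hx
    have hx0 : 0 ≤ x := hx.1
    have hx1 : x ≤ 1 := hx.2
    have : t - x * t = (1 - x) * t := by ring
    rw [this, Real.mul_rpow (by linarith) ht.le, mul_pow]
    ring
  rw [intervalIntegral.integral_congr hcongr, intervalIntegral.integral_const_mul]
  rw [show (k:ℝ) + 1 - μ = (k:ℝ) + 1 + (-μ) by ring, Real.rpow_add ht, Real.rpow_add ht,
    Real.rpow_natCast, Real.rpow_one]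
  ring

lemma aux_beta {μ : ℝ} (hμ0 : 0 < μ) (hμ1 : μ < 1) (k : ℕ) :
    ((∫ x in (0:ℝ)..1, x ^ k * (1 - x) ^ (-μ) : ℝ) : ℂ)
      = (Nat.factorial k : ℂ) * Complex.Gamma ((1 - μ : ℝ) : ℂ)
          / Complex.Gamma (((k : ℝ) + 2 - μ : ℝ) : ℂ) := by
  have h1 : ((∫ x in (0:ℝ)..1, x ^ k * (1 - x) ^ (-μ) : ℝ) : ℂ)
      = Complex.betaIntegral ((k : ℂ) + 1) ((1 - μ : ℝ) : ℂ) := by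
    rw [← intervalIntegral.integral_ofReal, Complex.betaIntegral]
    apply intervalIntegral.integral_congr
    intro x hx
    rw [Set.uIcc_of_le (by norm_num)] at hx
    have hx1 : (0:ℝ) ≤ 1 - x := by linarith [hx.2]
    have e1 : ((k : ℂ) + 1 - 1) = (k : ℂ) := by ring
    have e2 : (((1 - μ : ℝ) : ℂ) - 1) = ((-μ : ℝ) : ℂ) := by push_cast; ring
    simp only [e1, e2, Complex.cpow_natCast,
      show (1 - (x:ℂ)) = (((1 - x : ℝ)) : ℂ) by push_cast; ring,
      ← Complex.ofReal_cpow hx1]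
    push_cast
    ring
  have hs : 0 < ((k : ℂ) + 1).re := by
    simp only [Complex.add_re, Complex.natCast_re, Complex.one_re]
    positivity
  have htre : 0 < (((1 - μ : ℝ)) : ℂ).re := by
    rw [Complex.ofReal_re]; linarith
  have h2 := Complex.Gamma_mul_Gamma_eq_betaIntegral hs htre
  have hsum : ((k : ℂ) + 1) + ((1 - μ : ℝ) : ℂ) = (((k : ℝ) + 2 - μ : ℝ) : ℂ) := by
    push_cast; ring
  have hΓ : Complex.Gamma (((k : ℝ) + 2 - μ : ℝ) : ℂ) ≠ 0 := by
    apply Complex.Gamma_ne_zero_of_re_pos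
    rw [Complex.ofReal_re]
    have := Nat.cast_nonneg (α := ℝ) k
    linarith
  have hΓk : Complex.Gamma ((k : ℂ) + 1) = (Nat.factorial k : ℂ) := Complex.Gamma_nat_eq_factorial k
  rw [h1, eq_div_iff hΓ, ← hΓk, mul_comm (Complex.betaIntegral _ _), ← hsum, ← h2]

/-- Caputo fractional derivative of order `μ ∈ (0,1)` of the exponential `e^{ilτ}`:
`(1/Γ(1-μ)) ∫₀ᵗ (il) e^{ilτ} (t-τ)^{-μ} dτ = il t^{1-μ} E_{1,2-μ}(ilt)` for `t > 0`. -/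
theorem caputo_deriv_exp (μ l : ℝ) (hμ0 : 0 < μ) (hμ1 : μ < 1) (t : ℝ) (ht : 0 < t) :
    (1 / Complex.Gamma ((1 - μ : ℝ) : ℂ)) *
        ∫ τ in Set.Ioc (0 : ℝ) t,
          Complex.I * (l : ℂ) * Complex.exp (Complex.I * (l : ℂ) * (τ : ℂ)) *
            (((t - τ) ^ (-μ) : ℝ) : ℂ) =
      Complex.I * (l : ℂ) * ((t ^ (1 - μ) : ℝ) : ℂ) *
        mittagLeffler2 1 (2 - μ) (Complex.I * (l : ℂ) * (t : ℂ)) := by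
  set f : ℕ → ℝ → ℂ := fun k τ =>
    Complex.I * (l : ℂ) * ((Complex.I * (l : ℂ) * (τ : ℂ)) ^ k / (Nat.factorial k : ℂ)) *
      (((t - τ) ^ (-μ) : ℝ) : ℂ) with hfdef
  -- real integrability
  have hg : ∀ k : ℕ, IntegrableOn (fun τ => τ ^ k * (t - τ) ^ (-μ)) (Set.Ioc 0 t) volume :=
    fun k => (intervalIntegrable_iff_integrableOn_Ioc_of_le ht.le).mp
      (aux_intervalIntegrable hμ0 hμ1 t k)
  -- rewrite f k as constant times real function
  have hfeq : ∀ k : ℕ, f k = fun τ : ℝ =>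
      (Complex.I * (l : ℂ) * (Complex.I * (l : ℂ)) ^ k / (Nat.factorial k : ℂ)) *
        ((τ ^ k * (t - τ) ^ (-μ) : ℝ) : ℂ) := by
    intro k
    funext τ
    simp only [hfdef]
    push_cast
    ring
  have hf : ∀ k : ℕ, IntegrableOn (f k) (Set.Ioc 0 t) volume := by
    intro k
    rw [hfeq k]
    exact ((hg k).ofReal).const_mul _
  -- the constant C
  have hC : IntegrableOn (fun τ : ℝ => (t - τ) ^ (-μ)) (Set.Ioc 0 t) volume := by
    have := hg 0
    simpa using this
  set C : ℝ := ∫ τ in Set.Ioc (0:ℝ) t, (t - τ) ^ (-μ) with hCdef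
  -- norm bound
  have hbound : ∀ k : ℕ, (∫ τ in Set.Ioc (0:ℝ) t, ‖f k τ‖)
      ≤ (|l| * (|l| * t) ^ k / (Nat.factorial k : ℝ)) * C := by
    intro k
    have h1 : (∫ τ in Set.Ioc (0:ℝ) t, ‖f k τ‖)
        ≤ ∫ τ in Set.Ioc (0:ℝ) t,
            (|l| * (|l| * t) ^ k / (Nat.factorial k : ℝ)) * (t - τ) ^ (-μ) := by
      apply setIntegral_mono_on ((hf k).norm) (hC.const_mul _) measurableSet_Ioc
      intro τ hτ
      have hτ0 : 0 < τ := hτ.1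
      have hτt : τ ≤ t := hτ.2
      have habs : |τ| = τ := abs_of_pos hτ0
      have hrnn : (0:ℝ) ≤ (t - τ) ^ (-μ) := Real.rpow_nonneg (by linarith) _
      simp only [hfdef, norm_mul, norm_div, norm_pow, Complex.norm_real,
        Complex.norm_I, Complex.norm_natCast, one_mul, Real.norm_eq_abs]
      rw [abs_of_nonneg hrnn, habs, mul_div_assoc]
      gcongr <;> first
        | positivity
        | exact hτ0.le
        | exact hτt
    rw [MeasureTheory.integral_const_mul] at h1
    exact h1
  have hCnn : 0 ≤ C := setIntegral_nonneg measurableSet_Ioc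
    (fun τ hτ => Real.rpow_nonneg (by linarith [hτ.2]) _)
  have hsum : Summable fun k : ℕ => ∫ τ in Set.Ioc (0:ℝ) t, ‖f k τ‖ := by
    refine Summable.of_nonneg_of_le (fun k => integral_nonneg fun τ => norm_nonneg _)
      (fun k => (hbound k).trans (le_of_eq (by ring)))
      (((Real.summable_pow_div_factorial (|l| * t)).mul_left (|l| * C)))
  -- pointwise series expansion
  have hpt : ∀ τ : ℝ,
      Complex.I * (l : ℂ) * Complex.exp (Complex.I * (l : ℂ) * (τ : ℂ)) *
          (((t - τ) ^ (-μ) : ℝ) : ℂ) = ∑' k : ℕ, f k τ := by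
    intro τ
    simp only [hfdef]
    rw [tsum_mul_right, tsum_mul_left, Complex.exp_eq_exp_ℂ, NormedSpace.exp_eq_tsum_div]
  have hswap := MeasureTheory.integral_tsum_of_summable_integral_norm
    (μ := volume.restrict (Set.Ioc (0:ℝ) t)) hf hsum
  -- per-term value
  have hterm : ∀ k : ℕ, (∫ τ in Set.Ioc (0:ℝ) t, f k τ)
      = (Complex.I * (l : ℂ) * (Complex.I * (l : ℂ)) ^ k / (Nat.factorial k : ℂ)) *
          (((t ^ ((k:ℝ) + 1 - μ) : ℝ)) : ℂ) *
          ((Nat.factorial k : ℂ) * Complex.Gamma ((1 - μ : ℝ) : ℂ)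
            / Complex.Gamma (((k : ℝ) + 2 - μ : ℝ) : ℂ)) := by
    intro k
    have hreal : (∫ a in Set.Ioc (0:ℝ) t, (a ^ k * (t - a) ^ (-μ)))
        = t ^ ((k:ℝ) + 1 - μ) * ∫ x in (0:ℝ)..1, x ^ k * (1 - x) ^ (-μ) := by
      rw [← intervalIntegral.integral_of_le ht.le]
      exact aux_subst ht k
    have h2 : (∫ a in Set.Ioc (0:ℝ) t, ((a ^ k * (t - a) ^ (-μ) : ℝ) : ℂ))
        = (((t ^ ((k:ℝ) + 1 - μ) * ∫ x in (0:ℝ)..1, x ^ k * (1 - x) ^ (-μ) : ℝ)) : ℂ) := by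
      rw [← hreal]
      first
      | exact integral_ofReal
      | norm_cast
    rw [hfeq k, MeasureTheory.integral_const_mul, h2, Complex.ofReal_mul,
      aux_beta hμ0 hμ1 k]
    ring
  calc (1 / Complex.Gamma ((1 - μ : ℝ) : ℂ)) *
        ∫ τ in Set.Ioc (0 : ℝ) t,
          Complex.I * (l : ℂ) * Complex.exp (Complex.I * (l : ℂ) * (τ : ℂ)) *
            (((t - τ) ^ (-μ) : ℝ) : ℂ)
      = (1 / Complex.Gamma ((1 - μ : ℝ) : ℂ)) * ∑' k : ℕ, ∫ τ in Set.Ioc (0:ℝ) t, f k τ := by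
        rw [hswap]
        congr 1
        exact integral_congr_ae (Filter.Eventually.of_forall hpt)
    _ = ∑' k : ℕ, (1 / Complex.Gamma ((1 - μ : ℝ) : ℂ)) *
          ((Complex.I * (l : ℂ) * (Complex.I * (l : ℂ)) ^ k / (Nat.factorial k : ℂ)) *
            (((t ^ ((k:ℝ) + 1 - μ) : ℝ)) : ℂ) *
            ((Nat.factorial k : ℂ) * Complex.Gamma ((1 - μ : ℝ) : ℂ)
              / Complex.Gamma (((k : ℝ) + 2 - μ : ℝ) : ℂ))) := by
        rw [tsum_mul_left]
        congr 1
        exact tsum_congr hterm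
    _ = Complex.I * (l : ℂ) * ((t ^ (1 - μ) : ℝ) : ℂ) *
        mittagLeffler2 1 (2 - μ) (Complex.I * (l : ℂ) * (t : ℂ)) := by
        rw [mittagLeffler2, ← tsum_mul_left]
        apply tsum_congr
        intro k
        have hΓν : Complex.Gamma ((1 - μ : ℝ) : ℂ) ≠ 0 := by
          apply Complex.Gamma_ne_zero_of_re_pos
          rw [Complex.ofReal_re]; linarith
        have hΓd : Complex.Gamma (((k : ℝ) + 2 - μ : ℝ) : ℂ) ≠ 0 := by
          apply Complex.Gamma_ne_zero_of_re_pos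
          rw [Complex.ofReal_re]
          have := Nat.cast_nonneg (α := ℝ) k
          linarith
        have hfk : (Nat.factorial k : ℂ) ≠ 0 := by
          exact_mod_cast Nat.cast_ne_zero.mpr (Nat.factorial_ne_zero k)
        have harg : (1 * (k : ℝ) + (2 - μ)) = ((k : ℝ) + 2 - μ) := by ring
        rw [harg]
        have hrp : ((t ^ ((k:ℝ) + 1 - μ) : ℝ) : ℂ)
            = ((t : ℂ)) ^ k * ((t ^ (1 - μ) : ℝ) : ℂ) := by
          rw [show (k:ℝ) + 1 - μ = (k:ℝ) + (1 - μ) by ring, Real.rpow_add ht,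
            Real.rpow_natCast]
          push_cast
          ring
        rw [hrp]
        push_cast at hΓν hΓd ⊢
        field_simp [hΓν, hΓd, hfk]
        ring
end

section
/- Let μ be a real number with 0 < μ < 2 and μ ≠ 1. Then the function u ↦ sin²(u)/u^{1+μ} is integrable on (0, ∞) and ∫_0^∞ sin²(u) / u^{1+μ} du = 2^{μ−1} · Γ(2−μ) · cos(π μ / 2) / (μ (1 − μ)). -/
open MeasureTheory

section Helpers

open Real Set Filter

lemma aux_exp_sin_sq {t : ℝ} (ht : 0 < t) :
    ∫ u in Set.Ioi (0:ℝ), Real.sin u ^ 2 * Real.exp (-(u * t)) = 2 / (t * (t ^ 2 + 4)) := by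
  have ht4 : t ^ 2 + 4 ≠ 0 := by positivity
  set F : ℝ → ℝ := fun u =>
    Real.exp (-(u * t)) * (-(1 / (2 * t)) + (t * Real.cos (2 * u) - 2 * Real.sin (2 * u)) / (2 * (t ^ 2 + 4))) with hF
  have hderiv : ∀ u ∈ Set.Ioi (0:ℝ), HasDerivAt F (Real.sin u ^ 2 * Real.exp (-(u * t))) u := by
    intro u _
    have hexp : HasDerivAt (fun u : ℝ => Real.exp (-(u * t))) (Real.exp (-(u * t)) * (-t)) u := by
      have h1 : HasDerivAt (fun u : ℝ => -(u * t)) (-t) u := by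
        exact (hasDerivAt_mul_const t).neg
      simpa using h1.exp
    have hcos : HasDerivAt (fun u : ℝ => Real.cos (2 * u)) (-Real.sin (2 * u) * 2) u := by
      have h2 : HasDerivAt (fun u : ℝ => 2 * u) 2 u := by
        simpa using (hasDerivAt_id u).const_mul (2:ℝ)
      exact (Real.hasDerivAt_cos (2 * u)).comp u h2
    have hsin : HasDerivAt (fun u : ℝ => Real.sin (2 * u)) (Real.cos (2 * u) * 2) u := by
      have h2 : HasDerivAt (fun u : ℝ => 2 * u) 2 u := by
        simpa using (hasDerivAt_id u).const_mul (2:ℝ)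
      exact (Real.hasDerivAt_sin (2 * u)).comp u h2
    have hG : HasDerivAt (fun u : ℝ => -(1 / (2 * t)) + (t * Real.cos (2 * u) - 2 * Real.sin (2 * u)) / (2 * (t ^ 2 + 4)))
        ((t * (-Real.sin (2 * u) * 2) - 2 * (Real.cos (2 * u) * 2)) / (2 * (t ^ 2 + 4))) u := by
      exact (((hcos.const_mul t).sub (hsin.const_mul 2)).div_const _).const_add _
    have := hexp.mul hG
    refine this.congr_deriv ?_
    have hs : Real.sin u ^ 2 = (1 - Real.cos (2 * u)) / 2 := by
      rw [Real.cos_two_mul]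
      nlinarith [Real.sin_sq_add_cos_sq u]
    rw [hs]
    field_simp
    ring
  have hcont : ContinuousWithinAt F (Set.Ici 0) 0 := by
    apply Continuous.continuousWithinAt
    fun_prop
  have hmaj : IntegrableOn (fun u : ℝ => Real.exp (-(u * t))) (Set.Ioi 0) := by
    refine (exp_neg_integrableOn_Ioi 0 ht).congr_fun (fun x _ => ?_) measurableSet_Ioi
    beta_reduce
    rw [neg_mul, mul_comm]
  have hint : IntegrableOn (fun u => Real.sin u ^ 2 * Real.exp (-(u * t))) (Set.Ioi 0) := by
    apply Integrable.mono' hmaj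
    · exact ((Real.continuous_sin.pow 2).mul (by fun_prop)).aestronglyMeasurable.restrict
    · filter_upwards with u
      rw [Real.norm_eq_abs, abs_mul, abs_of_nonneg (Real.exp_pos _).le,
        abs_of_nonneg (sq_nonneg _)]
      nlinarith [Real.sin_sq_le_one u, Real.exp_pos (-(u*t))]
  have htend : Tendsto F atTop (nhds 0) := by
    refine squeeze_zero_norm (f := F) (a := fun u => Real.exp (-(u * t)) * (1 / (2 * t) + (t + 2) / (2 * (t ^ 2 + 4)))) ?_ ?_
    · intro u
      rw [hF]
      simp only [Real.norm_eq_abs, abs_mul, abs_of_nonneg (Real.exp_pos _).le]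
      gcongr
      calc |(-(1 / (2 * t)) + (t * Real.cos (2 * u) - 2 * Real.sin (2 * u)) / (2 * (t ^ 2 + 4)))|
          ≤ |(1 / (2 * t))| + |((t * Real.cos (2 * u) - 2 * Real.sin (2 * u)) / (2 * (t ^ 2 + 4)))| := by
            simpa [abs_neg] using abs_add_le (-(1 / (2 * t)))
              ((t * Real.cos (2 * u) - 2 * Real.sin (2 * u)) / (2 * (t ^ 2 + 4)))
        _ ≤ 1 / (2 * t) + (t + 2) / (2 * (t ^ 2 + 4)) := by
            gcongr
            · exact le_of_eq (abs_of_pos (by positivity))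
            · rw [abs_div, abs_of_pos (by positivity : (0:ℝ) < 2 * (t ^ 2 + 4))]
              gcongr
              calc |t * Real.cos (2*u) - 2 * Real.sin (2*u)| ≤ |t * Real.cos (2*u)| + |2 * Real.sin (2*u)| := abs_sub _ _
                _ ≤ t + 2 := by
                  rw [abs_mul, abs_mul, abs_of_pos ht, abs_of_pos (by norm_num : (0:ℝ) < 2)]
                  have := Real.abs_cos_le_one (2*u); have := Real.abs_sin_le_one (2*u)
                  nlinarith
    · have hmt : Tendsto (fun u : ℝ => u * t) atTop atTop :=
        Tendsto.atTop_mul_const ht tendsto_id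
      have h1 : Tendsto (fun u : ℝ => Real.exp (-(u * t))) atTop (nhds 0) := by
        exact Real.tendsto_exp_neg_atTop_nhds_zero.comp hmt
      simpa using h1.mul_const _
  have := integral_Ioi_of_hasDerivAt_of_tendsto hcont hderiv hint htend
  rw [this, hF]
  simp only [zero_mul, neg_zero, mul_zero, Real.cos_zero, Real.sin_zero, Real.exp_zero]
  field_simp
  ring

lemma rpow_int_Ioc {s : ℝ} (hs : -1 < s) : IntegrableOn (fun x : ℝ => x ^ s) (Set.Ioc 0 1) := by
  have := intervalIntegral.intervalIntegrable_rpow' (r := s) hs (a := (0:ℝ)) (b := 1)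
  rwa [intervalIntegrable_iff_integrableOn_Ioc_of_le zero_le_one] at this

lemma main_integrable {μ : ℝ} (hμ0 : 0 < μ) (hμ2 : μ < 2) :
    IntegrableOn (fun u : ℝ => Real.sin u ^ 2 / u ^ (1 + μ)) (Set.Ioi 0) := by
  have hmeas : AEStronglyMeasurable (fun u : ℝ => Real.sin u ^ 2 / u ^ (1 + μ)) volume := by
    apply Measurable.aestronglyMeasurable
    measurability
  rw [show Set.Ioi (0:ℝ) = Set.Ioc 0 1 ∪ Set.Ioi 1 from (Set.Ioc_union_Ioi_eq_Ioi zero_le_one).symm]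
  apply IntegrableOn.union
  · apply Integrable.mono' (rpow_int_Ioc (s := 1 - μ) (by linarith)) hmeas.restrict
    rw [ae_restrict_iff' measurableSet_Ioc]
    filter_upwards with u hu
    have hu0 : 0 < u := hu.1
    rw [Real.norm_eq_abs, abs_div, abs_of_nonneg (sq_nonneg _),
      abs_of_pos (Real.rpow_pos_of_pos hu0 _)]
    have h2 : u ^ (1 - μ) = u ^ (2:ℝ) / u ^ (1 + μ) := by
      rw [← Real.rpow_sub hu0]; congr 1; ring
    rw [h2, show u ^ (2:ℝ) = u ^ 2 by
      rw [show (2:ℝ) = ((2:ℕ):ℝ) by norm_num, Real.rpow_natCast]]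
    exact div_le_div_of_nonneg_right Real.sin_sq_le_sq (Real.rpow_pos_of_pos hu0 _).le
  · apply Integrable.mono'
      (integrableOn_Ioi_rpow_of_lt (show -(1+μ) < -1 by linarith) one_pos) hmeas.restrict
    rw [ae_restrict_iff' measurableSet_Ioi]
    filter_upwards with u hu
    have hu0 : (0:ℝ) < u := lt_trans one_pos hu
    rw [Real.norm_eq_abs, abs_div, abs_of_nonneg (sq_nonneg _),
      abs_of_pos (Real.rpow_pos_of_pos hu0 _), Real.rpow_neg hu0.le, ← one_div]
    exact div_le_div_of_nonneg_right (Real.sin_sq_le_one u) (Real.rpow_pos_of_pos hu0 _).le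

lemma t_integrable {μ : ℝ} (hμ0 : 0 < μ) (hμ2 : μ < 2) :
    IntegrableOn (fun t : ℝ => t ^ (μ - 1) / (t ^ 2 + 4)) (Set.Ioi 0) := by
  have hmeas : AEStronglyMeasurable (fun t : ℝ => t ^ (μ - 1) / (t ^ 2 + 4)) volume := by
    apply Measurable.aestronglyMeasurable
    measurability
  rw [show Set.Ioi (0:ℝ) = Set.Ioc 0 1 ∪ Set.Ioi 1 from (Set.Ioc_union_Ioi_eq_Ioi zero_le_one).symm]
  apply IntegrableOn.union
  · apply Integrable.mono' (rpow_int_Ioc (s := μ - 1) (by linarith)) hmeas.restrict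
    rw [ae_restrict_iff' measurableSet_Ioc]
    filter_upwards with t htm
    have ht0 : 0 < t := htm.1
    have h4 : (0:ℝ) < t ^ 2 + 4 := by positivity
    rw [Real.norm_eq_abs, abs_div, abs_of_pos (Real.rpow_pos_of_pos ht0 _), abs_of_pos h4]
    rw [div_le_iff₀ h4]
    nlinarith [(Real.rpow_pos_of_pos ht0 (μ - 1)).le]
  · apply Integrable.mono'
      (integrableOn_Ioi_rpow_of_lt (show μ - 3 < -1 by linarith) one_pos) hmeas.restrict
    rw [ae_restrict_iff' measurableSet_Ioi]
    filter_upwards with t htm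
    have ht0 : (0:ℝ) < t := lt_trans one_pos htm
    have h4 : (0:ℝ) < t ^ 2 + 4 := by positivity
    rw [Real.norm_eq_abs, abs_div, abs_of_pos (Real.rpow_pos_of_pos ht0 _), abs_of_pos h4]
    have h2 : t ^ (μ - 3) = t ^ (μ - 1) / t ^ (2:ℝ) := by
      rw [← Real.rpow_sub ht0]; congr 1; ring
    rw [h2, show t ^ (2:ℝ) = t ^ 2 by
      rw [show (2:ℝ) = ((2:ℕ):ℝ) by norm_num, Real.rpow_natCast]]
    apply div_le_div_of_nonneg_left (Real.rpow_pos_of_pos ht0 _).le (by positivity)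
    nlinarith

lemma exp_int {c : ℝ} (hc : 0 < c) :
    ∫ x in Set.Ioi (0:ℝ), Real.exp (-(c * x)) = 1 / c := by
  have h := Real.integral_rpow_mul_exp_neg_mul_Ioi (a := 1) (r := c) one_pos hc
  simpa [Real.Gamma_one, Real.rpow_one, sub_self, Real.rpow_zero] using h

lemma J_val {μ : ℝ} (hμ0 : 0 < μ) (hμ2 : μ < 2) :
    ∫ t in Set.Ioi (0:ℝ), t ^ (μ - 1) / (t ^ 2 + 4) =
      2 ^ (μ - 3) * Real.pi / Real.sin (Real.pi * μ / 2) := by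
  set ν := volume.restrict (Set.Ioi (0:ℝ)) with hν
  set f2 : ℝ → ℝ → ℝ := fun t x => t ^ (μ - 1) * Real.exp (-((t ^ 2 + 4) * x)) with hf2
  have hmeas : AEStronglyMeasurable (Function.uncurry f2) (ν.prod ν) := by
    have hm : Measurable (fun p : ℝ × ℝ => p.1 ^ (μ - 1) * Real.exp (-((p.1 ^ 2 + 4) * p.2))) := by
      measurability
    exact hm.aestronglyMeasurable
  -- inner x-integral
  have hinner : ∀ t : ℝ, ∫ x in Set.Ioi (0:ℝ), f2 t x = t ^ (μ - 1) / (t ^ 2 + 4) := by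
    intro t
    have hc : (0:ℝ) < t ^ 2 + 4 := by positivity
    rw [hf2]
    simp only
    rw [integral_const_mul, exp_int hc]
    ring
  -- slice integrability
  have hslice : ∀ t : ℝ, Integrable (fun x => f2 t x) ν := by
    intro t
    have hc : (0:ℝ) < t ^ 2 + 4 := by positivity
    have := (exp_neg_integrableOn_Ioi 0 hc).congr_fun
      (fun x _ => by rw [neg_mul] : ∀ x ∈ Set.Ioi (0:ℝ),
        Real.exp (-(t ^ 2 + 4) * x) = Real.exp (-((t ^ 2 + 4) * x))) measurableSet_Ioi
    exact this.const_mul _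
  -- product integrability
  have hprod : Integrable (Function.uncurry f2) (ν.prod ν) := by
    rw [MeasureTheory.integrable_prod_iff hmeas]
    constructor
    · filter_upwards with t
      exact hslice t
    · apply ((t_integrable hμ0 hμ2).congr ?_)
      rw [hν, Filter.EventuallyEq, ae_restrict_iff' measurableSet_Ioi]
      filter_upwards with t ht
      have ht0 : (0:ℝ) < t := ht
      have hnn : ∀ x : ℝ, ‖f2 t x‖ = f2 t x := by
        intro x
        rw [Real.norm_eq_abs, abs_of_nonneg]
        exact mul_nonneg (Real.rpow_pos_of_pos ht0 _).le (Real.exp_pos _).le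
      have heq : ∫ y in Set.Ioi (0:ℝ), ‖Function.uncurry f2 (t, y)‖ =
          ∫ y in Set.Ioi (0:ℝ), f2 t y :=
        integral_congr_ae (Filter.Eventually.of_forall fun x => hnn x)
      rw [heq, hinner t]
  -- swap
  have hswap := MeasureTheory.integral_integral_swap hprod
  have hLHS : ∫ t in Set.Ioi (0:ℝ), t ^ (μ - 1) / (t ^ 2 + 4) =
      ∫ t in Set.Ioi (0:ℝ), ∫ x in Set.Ioi (0:ℝ), f2 t x := by
    apply integral_congr_ae
    filter_upwards with t
    exact (hinner t).symm
  -- inner t-integral after swap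
  have hswapped : ∀ x ∈ Set.Ioi (0:ℝ), ∫ t in Set.Ioi (0:ℝ), f2 t x =
      Real.exp (-(4 * x)) * (x ^ (-(μ / 2)) * (1 / 2) * Real.Gamma (μ / 2)) := by
    intro x hx
    have hx0 : (0:ℝ) < x := hx
    have hkey := integral_rpow_mul_exp_neg_mul_rpow (p := 2) (q := μ - 1) (b := x)
      two_pos (by linarith) hx0
    calc ∫ t in Set.Ioi (0:ℝ), f2 t x
        = ∫ t in Set.Ioi (0:ℝ), Real.exp (-(4 * x)) * (t ^ (μ - 1) * Real.exp (-x * t ^ (2:ℝ))) := by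
          apply setIntegral_congr_fun measurableSet_Ioi
          intro t _
          rw [hf2]
          simp only
          rw [show t ^ (2:ℝ) = t ^ 2 by
            rw [show (2:ℝ) = ((2:ℕ):ℝ) by norm_num, Real.rpow_natCast],
            show -((t ^ 2 + 4) * x) = (-x * t ^ 2) + (-(4 * x)) by ring, Real.exp_add]
          ring
      _ = Real.exp (-(4 * x)) * (x ^ (-(μ / 2)) * (1 / 2) * Real.Gamma (μ / 2)) := by
          rw [integral_const_mul, hkey,
            show (-(μ - 1 + 1) / 2 : ℝ) = -(μ / 2) by ring,
            show ((μ - 1 + 1) / 2 : ℝ) = μ / 2 by ring]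
  -- outer x-integral
  have houter : ∫ x in Set.Ioi (0:ℝ),
      Real.exp (-(4 * x)) * (x ^ (-(μ / 2)) * (1 / 2) * Real.Gamma (μ / 2)) =
      (1 / 2) * Real.Gamma (μ / 2) * ((1 / 4) ^ (1 - μ / 2) * Real.Gamma (1 - μ / 2)) := by
    have hkey := Real.integral_rpow_mul_exp_neg_mul_Ioi (a := 1 - μ / 2) (r := 4)
      (by linarith) (by norm_num)
    calc ∫ x in Set.Ioi (0:ℝ), Real.exp (-(4 * x)) * (x ^ (-(μ / 2)) * (1 / 2) * Real.Gamma (μ / 2))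
        = ∫ x in Set.Ioi (0:ℝ), (1 / 2) * Real.Gamma (μ / 2) * (x ^ (1 - μ / 2 - 1) * Real.exp (-(4 * x))) := by
          apply setIntegral_congr_fun measurableSet_Ioi
          intro x _
          rw [show (1 - μ / 2 - 1 : ℝ) = -(μ / 2) by ring]
          ring
      _ = (1 / 2) * Real.Gamma (μ / 2) * ((1 / 4) ^ (1 - μ / 2) * Real.Gamma (1 - μ / 2)) := by
          rw [integral_const_mul, hkey]
  -- combine
  have hcomb : ∫ t in Set.Ioi (0:ℝ), t ^ (μ - 1) / (t ^ 2 + 4) =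
      (1 / 2) * Real.Gamma (μ / 2) * ((1 / 4) ^ (1 - μ / 2) * Real.Gamma (1 - μ / 2)) := by
    rw [hLHS, hswap, ← houter]
    exact setIntegral_congr_fun measurableSet_Ioi hswapped
  rw [hcomb]
  -- final algebra
  have hrefl := Real.Gamma_mul_Gamma_one_sub (μ / 2)
  have hquarter : ((1:ℝ) / 4) ^ (1 - μ / 2) = 2 ^ (μ - 2) := by
    rw [show ((1:ℝ)/4) = (2:ℝ) ^ (-2:ℝ) by
      rw [show (-2:ℝ) = -((2:ℕ):ℝ) by norm_num, Real.rpow_neg two_pos.le, Real.rpow_natCast]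
      norm_num]
    rw [← Real.rpow_mul two_pos.le]
    congr 1
    ring
  rw [hquarter, show μ - 2 = (μ - 3) + 1 by ring, Real.rpow_add two_pos, Real.rpow_one,
    show Real.pi * μ / 2 = Real.pi * (μ / 2) by ring]
  rw [show (1 / 2 : ℝ) * Real.Gamma (μ / 2) * (2 ^ (μ - 3) * 2 * Real.Gamma (1 - μ / 2)) =
    (2:ℝ) ^ (μ - 3) * (Real.Gamma (μ / 2) * Real.Gamma (1 - μ / 2)) by ring, hrefl]
  ring

-- helpers for the first (main) Fubini swap
lemma slice_meas (t μ : ℝ) :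
    Measurable (fun u : ℝ => Real.sin u ^ 2 * (t ^ μ * Real.exp (-(u * t)))) := by
  measurability

lemma prod_meas (μ : ℝ) :
    Measurable (fun p : ℝ × ℝ => Real.sin p.1 ^ 2 * (p.2 ^ μ * Real.exp (-(p.1 * p.2)))) := by
  measurability

lemma slice_int {t : ℝ} (μ : ℝ) (ht0 : 0 < t) :
    IntegrableOn (fun u : ℝ => Real.sin u ^ 2 * (t ^ μ * Real.exp (-(u * t)))) (Set.Ioi 0) := by
  have hmaj : IntegrableOn (fun u : ℝ => t ^ μ * Real.exp (-(u * t))) (Set.Ioi 0) := by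
    apply Integrable.const_mul
    refine (exp_neg_integrableOn_Ioi 0 ht0).congr_fun (fun x _ => ?_) measurableSet_Ioi
    beta_reduce
    rw [neg_mul, mul_comm]
  apply Integrable.mono' hmaj ((slice_meas t μ).aestronglyMeasurable.restrict)
  filter_upwards with u
  rw [Real.norm_eq_abs, abs_of_nonneg (by positivity)]
  have h1 : Real.sin u ^ 2 ≤ 1 := Real.sin_sq_le_one u
  have hX : (0:ℝ) < t ^ μ * Real.exp (-(u * t)) := by positivity
  nlinarith [mul_nonneg (sub_nonneg.mpr h1) hX.le]

lemma u_inner {t : ℝ} (μ : ℝ) (ht : 0 < t) :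
    ∫ u in Set.Ioi (0:ℝ), Real.sin u ^ 2 * (t ^ μ * Real.exp (-(u * t))) =
      t ^ μ * (2 / (t * (t ^ 2 + 4))) := by
  rw [show (fun u : ℝ => Real.sin u ^ 2 * (t ^ μ * Real.exp (-(u * t)))) =
      fun u : ℝ => t ^ μ * (Real.sin u ^ 2 * Real.exp (-(u * t))) from funext fun u => by ring]
  rw [integral_const_mul, aux_exp_sin_sq ht]

lemma t_inner {u μ : ℝ} (hμ0 : 0 < μ) (hu : 0 < u) :
    ∫ t in Set.Ioi (0:ℝ), Real.sin u ^ 2 * (t ^ μ * Real.exp (-(u * t))) =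
      Real.sin u ^ 2 * ((1 / u) ^ (1 + μ) * Real.Gamma (1 + μ)) := by
  rw [integral_const_mul]
  congr 1
  have h := Real.integral_rpow_mul_exp_neg_mul_Ioi (a := 1 + μ) (r := u) (by linarith) hu
  rw [← h]
  refine setIntegral_congr_fun measurableSet_Ioi (fun t _ => ?_)
  rw [show (1 + μ - 1 : ℝ) = μ by ring]

lemma prod_int {μ : ℝ} (hμ0 : 0 < μ) (hμ2 : μ < 2) :
    Integrable (Function.uncurry fun u t : ℝ => Real.sin u ^ 2 * (t ^ μ * Real.exp (-(u * t))))
      ((volume.restrict (Set.Ioi (0:ℝ))).prod (volume.restrict (Set.Ioi (0:ℝ)))) := by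
  rw [show (Function.uncurry fun u t : ℝ => Real.sin u ^ 2 * (t ^ μ * Real.exp (-(u * t)))) =
    (fun p : ℝ × ℝ => Real.sin p.1 ^ 2 * (p.2 ^ μ * Real.exp (-(p.1 * p.2)))) from rfl]
  rw [MeasureTheory.integrable_prod_iff' (prod_meas μ).aestronglyMeasurable]
  constructor
  · rw [ae_restrict_iff' measurableSet_Ioi]
    filter_upwards with t ht
    exact slice_int μ ht
  · apply ((t_integrable hμ0 hμ2).const_mul 2).congr
    rw [Filter.EventuallyEq, ae_restrict_iff' measurableSet_Ioi]
    filter_upwards with t ht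
    have ht0 : (0:ℝ) < t := ht
    have hnn : ∀ u : ℝ, ‖Real.sin u ^ 2 * (t ^ μ * Real.exp (-(u * t)))‖ =
        Real.sin u ^ 2 * (t ^ μ * Real.exp (-(u * t))) := by
      intro u
      rw [Real.norm_eq_abs, abs_of_nonneg (by positivity)]
    have heq : (∫ u in Set.Ioi (0:ℝ),
        ‖Real.sin u ^ 2 * (t ^ μ * Real.exp (-(u * t)))‖) =
        ∫ u in Set.Ioi (0:ℝ), Real.sin u ^ 2 * (t ^ μ * Real.exp (-(u * t))) :=
      integral_congr_ae (Filter.Eventually.of_forall fun u => hnn u)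
    rw [show (2:ℝ) * (t ^ (μ - 1) / (t ^ 2 + 4)) = t ^ μ * (2 / (t * (t ^ 2 + 4))) from ?_]
    · exact (heq.trans (u_inner μ ht0)).symm
    · rw [Real.rpow_sub ht0, Real.rpow_one]
      field_simp

lemma cos_ne_zero_of {μ : ℝ} (hμ0 : 0 < μ) (hμ2 : μ < 2) (hμ1 : μ ≠ 1) :
    Real.cos (Real.pi * μ / 2) ≠ 0 := by
  intro h
  rw [Real.cos_eq_zero_iff] at h
  obtain ⟨n, hn⟩ := h
  have hpi := Real.pi_pos
  have hμn : μ = 2 * (n:ℝ) + 1 := by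
    field_simp at hn
    nlinarith [hn]
  have h1 : ((-1:ℤ):ℝ) < (n:ℝ) := by push_cast; linarith
  have h2 : ((n:ℝ)) < ((1:ℤ):ℝ) := by push_cast; linarith
  have : n = 0 := by
    have h1' : (-1:ℤ) < n := by exact_mod_cast h1
    have h2' : n < (1:ℤ) := by exact_mod_cast h2
    omega
  rw [this] at hμn
  simp at hμn
  exact hμ1 hμn

lemma final_alg {μ : ℝ} (hμ0 : 0 < μ) (hμ2 : μ < 2) (hμ1 : μ ≠ 1) :
    2 * (2 ^ (μ - 3) * Real.pi / Real.sin (Real.pi * μ / 2)) / Real.Gamma (1 + μ) =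
      2 ^ (μ - 1) * Real.Gamma (2 - μ) * Real.cos (Real.pi * μ / 2) / (μ * (1 - μ)) := by
  have h1μ : (1:ℝ) - μ ≠ 0 := sub_ne_zero.mpr (Ne.symm hμ1)
  have hpi := Real.pi_pos
  have hS : (0:ℝ) < Real.sin (Real.pi * μ / 2) := by
    apply Real.sin_pos_of_pos_of_lt_pi
    · positivity
    · nlinarith
  have hC := cos_ne_zero_of hμ0 hμ2 hμ1
  have hΓμ : (0:ℝ) < Real.Gamma μ := Real.Gamma_pos_of_pos hμ0
  have hΓ1μ : Real.Gamma (1 - μ) ≠ 0 := by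
    apply Real.Gamma_ne_zero
    intro m
    cases m with
    | zero => simpa using h1μ
    | succ k =>
      have : ((k:ℝ)) ≥ 0 := Nat.cast_nonneg k
      push_cast
      intro hcon
      nlinarith
  have hGμ : Real.Gamma (1 + μ) = μ * Real.Gamma μ := by
    rw [add_comm, Real.Gamma_add_one hμ0.ne']
  have hG2 : Real.Gamma (2 - μ) = (1 - μ) * Real.Gamma (1 - μ) := by
    rw [show (2 - μ : ℝ) = (1 - μ) + 1 by ring, Real.Gamma_add_one h1μ]
  have hsin2 : Real.sin (Real.pi * μ) =
      2 * Real.sin (Real.pi * μ / 2) * Real.cos (Real.pi * μ / 2) := by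
    have h := Real.sin_two_mul (Real.pi * μ / 2)
    rw [show 2 * (Real.pi * μ / 2) = Real.pi * μ by ring] at h
    exact h
  have hsinne : Real.sin (Real.pi * μ) ≠ 0 := by
    rw [hsin2]
    exact mul_ne_zero (mul_ne_zero two_ne_zero hS.ne') hC
  have hrefl := Real.Gamma_mul_Gamma_one_sub μ
  have hpieq : Real.Gamma μ * Real.Gamma (1 - μ) *
      (2 * Real.sin (Real.pi * μ / 2) * Real.cos (Real.pi * μ / 2)) = Real.pi := by
    rw [← hsin2, hrefl, div_mul_cancel₀ _ hsinne]
  have h21 : (2:ℝ) ^ (μ - 1) = 2 ^ (μ - 3) * 4 := by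
    rw [show μ - 1 = (μ - 3) + 2 by ring, Real.rpow_add two_pos,
      show ((2:ℝ) ^ (2:ℝ)) = 4 by
        rw [show (2:ℝ) = ((2:ℕ):ℝ) by norm_num]
        rw [Real.rpow_natCast]
        norm_num]
  set S := Real.sin (Real.pi * μ / 2) with hSdef
  set C := Real.cos (Real.pi * μ / 2) with hCdef
  rw [hGμ, hG2, h21, ← hpieq]
  field_simp
  ring
end Helpers

/-- For `0 < μ < 2`, `μ ≠ 1`, the function `u ↦ sin²u / u^{1+μ}` is integrable on `(0,∞)` and
`∫₀^∞ sin²u / u^{1+μ} du = 2^{μ-1} Γ(2-μ) cos(πμ/2) / (μ(1-μ))`. -/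
theorem integral_sin_sq_div_rpow (μ : ℝ) (hμ0 : 0 < μ) (hμ2 : μ < 2) (hμ1 : μ ≠ 1) :
    IntegrableOn (fun u : ℝ => Real.sin u ^ 2 / u ^ (1 + μ)) (Set.Ioi 0) ∧
    ∫ u in Set.Ioi (0 : ℝ), Real.sin u ^ 2 / u ^ (1 + μ) =
      2 ^ (μ - 1) * Real.Gamma (2 - μ) * Real.cos (Real.pi * μ / 2) / (μ * (1 - μ)) := by
  refine ⟨main_integrable hμ0 hμ2, ?_⟩
  have hG : 0 < Real.Gamma (1 + μ) := Real.Gamma_pos_of_pos (by linarith)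
  have step1 : ∀ u ∈ Set.Ioi (0:ℝ), Real.sin u ^ 2 / u ^ (1 + μ) =
      (∫ t in Set.Ioi (0:ℝ), Real.sin u ^ 2 * (t ^ μ * Real.exp (-(u * t)))) /
        Real.Gamma (1 + μ) := by
    intro u hu
    have hupos := Real.rpow_pos_of_pos (show (0:ℝ) < u from hu) (1 + μ)
    rw [t_inner hμ0 hu, Real.div_rpow zero_le_one (le_of_lt hu), Real.one_rpow]
    field_simp
  rw [setIntegral_congr_fun measurableSet_Ioi step1, integral_div,
    MeasureTheory.integral_integral_swap (prod_int hμ0 hμ2)]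
  have step2 : ∀ t ∈ Set.Ioi (0:ℝ),
      (∫ u in Set.Ioi (0:ℝ), Real.sin u ^ 2 * (t ^ μ * Real.exp (-(u * t)))) =
        2 * (t ^ (μ - 1) / (t ^ 2 + 4)) := by
    intro t ht
    have ht0 : (0:ℝ) < t := ht
    rw [u_inner μ ht0, Real.rpow_sub ht0, Real.rpow_one]
    field_simp
  rw [setIntegral_congr_fun measurableSet_Ioi step2, integral_const_mul, J_val hμ0 hμ2]
  exact final_alg hμ0 hμ2 hμ1
end

section
/- Let 0 < μ < 1 and let l, x be real numbers. Then the function y ↦ (e^{ilx} − e^{il(x−y)}) / y^{1+μ} is integrable on (0, ∞) and (μ / Γ(1−μ)) ∫_0^∞ (e^{ilx} − e^{il(x−y)}) / y^{1+μ} dy = (i l)^μ e^{ilx}, where (i l)^μ is the principal branch of the complex power (equal to 0 when l = 0). In particular, the Marchaud fractional derivative of order μ maps the periodic function x ↦ e^{ilx} to a constant multiple of itself. -/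
open MeasureTheory Set Complex


lemma norm_one_sub_exp_le_two {s : ℂ} (hs : 0 ≤ s.re) (y : ℝ) (hy : 0 ≤ y) :
    ‖1 - Complex.exp (-(s * y))‖ ≤ 2 := by
  calc ‖1 - Complex.exp (-(s * y))‖ ≤ ‖(1:ℂ)‖ + ‖Complex.exp (-(s * y))‖ := norm_sub_le _ _
  _ ≤ 1 + 1 := by
      gcongr
      · simp
      · rw [Complex.norm_exp]
        apply Real.exp_le_one_iff.mpr  -- maybe wrong name
        simp [Complex.neg_re, Complex.mul_re]
        positivity
  _ = 2 := by norm_num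

lemma norm_one_sub_exp_le_lin {s : ℂ} (hs : 0 ≤ s.re) (y : ℝ) (hy : 0 ≤ y) :
    ‖1 - Complex.exp (-(s * y))‖ ≤ 2 * ‖s‖ * y := by
  rcases le_or_gt ‖s * (y:ℂ)‖ 1 with h | h
  · rw [norm_sub_rev]
    calc ‖Complex.exp (-(s * y)) - 1‖ ≤ 2 * ‖-(s * (y:ℂ))‖ := by
          have := Complex.norm_exp_sub_one_le (x := -(s * (y:ℂ))) (by simpa using h)
          simpa [Function.comp_def] using this
    _ = 2 * ‖s‖ * y := by
        rw [norm_neg, norm_mul, Complex.norm_real, Real.norm_of_nonneg hy]; ring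
  · calc ‖1 - Complex.exp (-(s * y))‖ ≤ 2 := norm_one_sub_exp_le_two hs y hy
    _ ≤ 2 * ‖s‖ * y := by
        rw [norm_mul, Complex.norm_real, Real.norm_of_nonneg hy] at h
        nlinarith

lemma contOn_den (μ : ℝ) : ContinuousOn (fun y : ℝ => ((y ^ (1+μ) : ℝ) : ℂ)) (Ioi 0) :=
  Complex.continuous_ofReal.comp_continuousOn fun y hy =>
    (Real.continuousAt_rpow_const y _ (Or.inl (ne_of_gt hy))).continuousWithinAt

lemma den_ne_zero {μ y : ℝ} (hy : 0 < y) : ((y ^ (1+μ) : ℝ) : ℂ) ≠ 0 := by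
  simpa using (Real.rpow_pos_of_pos hy (1+μ)).ne'

lemma meas_f (μ : ℝ) (s : ℂ) :
    AEStronglyMeasurable (fun y : ℝ => (1 - Complex.exp (-(s * y))) / ((y ^ (1+μ) : ℝ) : ℂ))
      (volume.restrict (Ioi 0)) := by
  apply ContinuousOn.aestronglyMeasurable _ measurableSet_Ioi
  exact ((continuous_const.sub ((Complex.continuous_exp.comp
    ((continuous_const.mul Complex.continuous_ofReal).neg)))).continuousOn).div
    (contOn_den μ) fun y hy => den_ne_zero hy

lemma dominator_integrable {μ : ℝ} (hμ0 : 0 < μ) (hμ1 : μ < 1) {c : ℝ} (hc : 0 ≤ c) :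
    IntegrableOn (fun y : ℝ => min 2 (2*c*y) * y ^ (-(1+μ))) (Ioi 0) := by
  have hcont : ContinuousOn (fun y : ℝ => min 2 (2*c*y) * y ^ (-(1+μ))) (Ioi 0) := by
    apply (continuous_const.min (continuous_const.mul continuous_id)).continuousOn.mul
    exact fun y hy => (Real.continuousAt_rpow_const y _ (Or.inl (ne_of_gt hy))).continuousWithinAt
  rw [← Set.Ioc_union_Ioi_eq_Ioi (zero_le_one (α := ℝ))]
  apply IntegrableOn.union
  · have base1 : IntegrableOn (fun y : ℝ => y ^ (-μ)) (Ioc (0:ℝ) 1) := by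
      rw [← intervalIntegrable_iff_integrableOn_Ioc_of_le zero_le_one]
      exact intervalIntegral.intervalIntegrable_rpow' (by linarith)
    apply Integrable.mono' (base1.const_mul (2*c))
      (hcont.mono Set.Ioc_subset_Ioi_self |>.aestronglyMeasurable measurableSet_Ioc)
    refine (ae_restrict_iff' measurableSet_Ioc).mpr (ae_of_all _ fun y hy => ?_)
    obtain ⟨hy0, _⟩ := hy
    have hmin0 : 0 ≤ min 2 (2*c*y) := le_min (by norm_num) (by positivity)
    rw [Real.norm_of_nonneg (by positivity)]
    calc min 2 (2*c*y) * y ^ (-(1+μ)) ≤ 2*c*y * y ^ (-(1+μ)) :=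
          mul_le_mul_of_nonneg_right (min_le_right _ _) (Real.rpow_nonneg hy0.le _)
    _ = 2*c * y ^ (-μ) := by
        rw [mul_assoc]
        congr 1
        rw [show (-μ) = 1 + (-(1+μ)) by ring, Real.rpow_add hy0, Real.rpow_one]
  · have base2 : IntegrableOn (fun y : ℝ => y ^ (-(1+μ))) (Ioi (1:ℝ)) :=
      integrableOn_Ioi_rpow_of_lt (by linarith) one_pos
    apply Integrable.mono' (base2.const_mul 2)
      (hcont.mono (Set.Ioi_subset_Ioi zero_le_one) |>.aestronglyMeasurable measurableSet_Ioi)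
    refine (ae_restrict_iff' measurableSet_Ioi).mpr (ae_of_all _ fun y hy => ?_)
    have hy0 : (0:ℝ) < y := lt_trans one_pos hy
    have hmin0 : 0 ≤ min 2 (2*c*y) := le_min (by norm_num) (by positivity)
    rw [Real.norm_of_nonneg (by positivity)]
    exact mul_le_mul_of_nonneg_right (min_le_left _ _) (Real.rpow_nonneg hy0.le _)

lemma integrable_f {μ : ℝ} (hμ0 : 0 < μ) (hμ1 : μ < 1) {c : ℝ} {s : ℂ} (hs : 0 ≤ s.re)
    (hsc : ‖s‖ ≤ c) :
    IntegrableOn (fun y : ℝ => (1 - Complex.exp (-(s * y))) / ((y ^ (1+μ) : ℝ) : ℂ)) (Ioi 0) := by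
  have hc : 0 ≤ c := le_trans (norm_nonneg s) hsc
  apply Integrable.mono' (dominator_integrable hμ0 hμ1 hc) (meas_f μ s)
  refine (ae_restrict_iff' measurableSet_Ioi).mpr (ae_of_all _ fun y hy => ?_)
  have hy : (0:ℝ) < y := hy
  rw [norm_div, Complex.norm_real, Real.norm_of_nonneg (Real.rpow_nonneg hy.le _),
    div_eq_mul_inv, ← Real.rpow_neg hy.le]
  gcongr
  refine le_min (norm_one_sub_exp_le_two hs y hy.le) ?_
  calc ‖1 - Complex.exp (-(s * y))‖ ≤ 2 * ‖s‖ * y := norm_one_sub_exp_le_lin hs y hy.le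
  _ ≤ 2 * c * y := by gcongr

lemma meas_f' (μ : ℝ) (s : ℂ) :
    AEStronglyMeasurable (fun y : ℝ => (y:ℂ) * Complex.exp (-(s * y)) / ((y ^ (1+μ) : ℝ) : ℂ))
      (volume.restrict (Ioi 0)) := by
  apply ContinuousOn.aestronglyMeasurable _ measurableSet_Ioi
  exact ((Complex.continuous_ofReal.mul (Complex.continuous_exp.comp
    ((continuous_const.mul Complex.continuous_ofReal).neg))).continuousOn).div
    (contOn_den μ) fun y hy => den_ne_zero hy

lemma hasDerivAt_F {μ : ℝ} (hμ0 : 0 < μ) (hμ1 : μ < 1) {s : ℂ} (hs : 0 < s.re) :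
    HasDerivAt (fun z : ℂ => ∫ y in Ioi (0:ℝ),
        (1 - Complex.exp (-(z * y))) / ((y ^ (1+μ) : ℝ) : ℂ))
      (∫ y in Ioi (0:ℝ), (y:ℂ) * Complex.exp (-(s * y)) / ((y ^ (1+μ) : ℝ) : ℂ)) s := by
  have hb : 0 < s.re / 2 := by linarith
  have main := hasDerivAt_integral_of_dominated_loc_of_deriv_le (hs := Metric.ball_mem_nhds s hb)
    (F := fun z (y : ℝ) => (1 - Complex.exp (-(z * y))) / ((y ^ (1+μ) : ℝ) : ℂ))
    (F' := fun z (y : ℝ) => (y:ℂ) * Complex.exp (-(z * y)) / ((y ^ (1+μ) : ℝ) : ℂ))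
    (bound := fun y : ℝ => y ^ (-μ) * Real.exp (-(s.re/2) * y))
    (Filter.Eventually.of_forall fun z => meas_f μ z)
    (integrable_f hμ0 hμ1 (le_of_lt hs) (le_refl ‖s‖))
    (meas_f' μ s) ?_ ?_ ?_
  · exact main.2
  · refine (ae_restrict_iff' measurableSet_Ioi).mpr (ae_of_all _ fun y hy z hz => ?_)
    have hy : (0:ℝ) < y := hy
    have hzre : s.re / 2 ≤ z.re := by
      have := Complex.abs_re_le_norm (z - s)
      rw [Metric.mem_ball, Complex.dist_eq] at hz
      have h2 : |z.re - s.re| < s.re / 2 := by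
        simpa [Complex.sub_re] using lt_of_le_of_lt this hz
      have := abs_lt.mp h2
      linarith [this.1]
    rw [norm_div, Complex.norm_real, Real.norm_of_nonneg (Real.rpow_nonneg hy.le _),
      norm_mul, Complex.norm_real, Real.norm_of_nonneg hy.le,
      Complex.norm_exp]
    have hre : (-(z * y)).re = -(z.re * y) := by
      simp [Complex.mul_re]
    rw [hre]
    calc y * Real.exp (-(z.re * y)) / y ^ (1+μ)
        ≤ y * Real.exp (-(s.re/2 * y)) / y ^ (1+μ) := by
          have : s.re/2 * y ≤ z.re * y := mul_le_mul_of_nonneg_right hzre hy.le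
          gcongr <;> linarith
    _ = y ^ (-μ) * Real.exp (-(s.re/2) * y) := by
        have h : y * y ^ (-(1+μ)) = y ^ (-μ) := by
          rw [show (-μ) = 1 + -(1+μ) by ring, Real.rpow_add hy, Real.rpow_one]
        rw [div_eq_mul_inv, ← Real.rpow_neg hy.le, mul_right_comm, h, neg_mul]
  · have := integrableOn_rpow_mul_exp_neg_mul_rpow (p := 1) (s := -μ) (b := s.re/2)
      (by linarith) one_pos hb
    apply this.congr_fun _ measurableSet_Ioi
    intro y hy
    simp only [Real.rpow_one]
  · refine (ae_restrict_iff' measurableSet_Ioi).mpr (ae_of_all _ fun y hy z hz => ?_)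
    have hd : HasDerivAt (fun z : ℂ => 1 - Complex.exp (-(z * y)))
        ((y:ℂ) * Complex.exp (-(z * y))) z := by
      have h1 : HasDerivAt (fun z : ℂ => -(z * y)) (-(y:ℂ)) z := by
        simpa using ((hasDerivAt_id z).mul_const (y:ℂ)).fun_neg
      have h2 := h1.cexp
      have h3 := h2.const_sub 1
      rw [show (y:ℂ) * Complex.exp (-(z * y)) = -(Complex.exp (-(z * y)) * -(y:ℂ)) by ring]
      exact h3
    exact hd.div_const _

lemma F_scaling {μ : ℝ} (hμ0 : 0 < μ) (hμ1 : μ < 1) {t : ℝ} (ht : 0 < t) :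
    (∫ y in Ioi (0:ℝ), (1 - Complex.exp (-((t:ℂ) * y))) / ((y ^ (1+μ) : ℝ) : ℂ)) =
      ((t ^ μ : ℝ) : ℂ) *
        ∫ y in Ioi (0:ℝ), (1 - Complex.exp (-((1:ℂ) * y))) / ((y ^ (1+μ) : ℝ) : ℂ) := by
  have key := integral_comp_mul_left_Ioi
    (fun y : ℝ => (1 - Complex.exp (-((y:ℝ) : ℂ))) / ((y ^ (1+μ) : ℝ) : ℂ)) 0 ht
  rw [mul_zero] at key
  have lhs_eq : (∫ y in Ioi (0:ℝ),
      (1 - Complex.exp (-(((t*y : ℝ)) : ℂ))) / (((t*y) ^ (1+μ) : ℝ) : ℂ)) =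
      (((t ^ (1+μ) : ℝ))⁻¹ : ℂ) * ∫ y in Ioi (0:ℝ),
        (1 - Complex.exp (-((t:ℂ) * y))) / ((y ^ (1+μ) : ℝ) : ℂ) := by
    rw [← integral_const_mul]
    apply setIntegral_congr_fun measurableSet_Ioi
    intro y hy
    have hy : (0:ℝ) < y := hy
    have h1 : ((t ^ (1+μ) : ℝ) : ℂ) ≠ 0 := den_ne_zero ht
    have h2 : ((y ^ (1+μ) : ℝ) : ℂ) ≠ 0 := den_ne_zero hy
    simp only
    rw [Real.mul_rpow ht.le hy.le, Complex.ofReal_mul, Complex.ofReal_mul]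
    field_simp
  have key' : (∫ y in Ioi (0:ℝ),
      (1 - Complex.exp (-(((t*y : ℝ)) : ℂ))) / (((t*y) ^ (1+μ) : ℝ) : ℂ)) =
      ((t:ℂ))⁻¹ * ∫ y in Ioi (0:ℝ), (1 - Complex.exp (-((y:ℝ) : ℂ))) / ((y ^ (1+μ) : ℝ) : ℂ) := by
    rw [← Complex.ofReal_inv, ← Complex.real_smul]
    exact key
  have h1 : ((t ^ (1+μ) : ℝ) : ℂ) ≠ 0 := den_ne_zero ht
  simp only [one_mul]
  calc (∫ y in Ioi (0:ℝ), (1 - Complex.exp (-((t:ℂ) * y))) / ((y ^ (1+μ) : ℝ) : ℂ))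
      = ((t ^ (1+μ) : ℝ) : ℂ) * ((((t ^ (1+μ) : ℝ))⁻¹ : ℂ) *
        ∫ y in Ioi (0:ℝ), (1 - Complex.exp (-((t:ℂ) * y))) / ((y ^ (1+μ) : ℝ) : ℂ)) := by
        rw [← mul_assoc, mul_inv_cancel₀ h1, one_mul]
  _ = ((t ^ (1+μ) : ℝ) : ℂ) * ∫ y in Ioi (0:ℝ),
        (1 - Complex.exp (-(((t*y : ℝ)) : ℂ))) / (((t*y) ^ (1+μ) : ℝ) : ℂ) := by
        rw [lhs_eq]
  _ = ((t ^ (1+μ) : ℝ) : ℂ) * (((t:ℂ))⁻¹ *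
        ∫ y in Ioi (0:ℝ), (1 - Complex.exp (-((y:ℝ) : ℂ))) / ((y ^ (1+μ) : ℝ) : ℂ)) := by
        rw [key']
  _ = ((t ^ μ : ℝ) : ℂ) * ∫ y in Ioi (0:ℝ),
        (1 - Complex.exp (-((y:ℝ) : ℂ))) / ((y ^ (1+μ) : ℝ) : ℂ) := by
        rw [← mul_assoc]
        congr 1
        rw [← Complex.ofReal_inv, ← Complex.ofReal_mul]
        congr 1
        rw [Real.rpow_add ht, Real.rpow_one]
        field_simp

lemma integral_ofReal'' {f : ℝ → ℝ} {ν : Measure ℝ} :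
    ∫ x, ((f x : ℝ) : ℂ) ∂ν = ((∫ x, f x ∂ν : ℝ) : ℂ) := integral_ofReal

lemma deriv_int_at_one {μ : ℝ} (hμ0 : 0 < μ) (hμ1 : μ < 1) :
    (∫ y in Ioi (0:ℝ), (y:ℂ) * Complex.exp (-((1:ℂ) * y)) / ((y ^ (1+μ) : ℝ) : ℂ)) =
      ((Real.Gamma (1-μ) : ℝ) : ℂ) := by
  rw [Real.Gamma_eq_integral (by linarith : (0:ℝ) < 1 - μ)]
  rw [← integral_ofReal'' (f := fun x : ℝ => Real.exp (-x) * x ^ (1-μ-1))]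
  apply setIntegral_congr_fun measurableSet_Ioi
  intro y hy
  have hy : (0:ℝ) < y := hy
  have hreal : y * Real.exp (-y) / y ^ (1+μ) = Real.exp (-y) * y ^ (1-μ-1) := by
    have h : y * y ^ (-(1+μ)) = y ^ (1-μ-1) := by
      rw [show (1:ℝ)-μ-1 = 1 + -(1+μ) by ring, Real.rpow_add hy, Real.rpow_one]
    rw [div_eq_mul_inv, ← Real.rpow_neg hy.le, mul_right_comm, h, mul_comm]
  calc (y:ℂ) * Complex.exp (-((1:ℂ) * y)) / ((y ^ (1+μ) : ℝ) : ℂ)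
      = ((y * Real.exp (-y) / y ^ (1+μ) : ℝ) : ℂ) := by
        rw [one_mul, ← Complex.ofReal_neg, ← Complex.ofReal_exp]
        push_cast
        ring
  _ = ((Real.exp (-y) * y ^ (1-μ-1) : ℝ) : ℂ) := by rw [hreal]

lemma F_one {μ : ℝ} (hμ0 : 0 < μ) (hμ1 : μ < 1) :
    (∫ y in Ioi (0:ℝ), (1 - Complex.exp (-((1:ℂ) * y))) / ((y ^ (1+μ) : ℝ) : ℂ)) =
      ((Real.Gamma (1-μ) / μ : ℝ) : ℂ) := by
  set C := ∫ y in Ioi (0:ℝ), (1 - Complex.exp (-((1:ℂ) * y))) / ((y ^ (1+μ) : ℝ) : ℂ) with hC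
  have h1 : HasDerivAt (fun t : ℝ => ((t ^ μ : ℝ) : ℂ) * C) ((μ:ℂ) * C) 1 := by
    have hr : HasDerivAt (fun t : ℝ => t ^ μ) μ 1 := by
      simpa using Real.hasDerivAt_rpow_const (x := 1) (p := μ) (Or.inl one_ne_zero)
    simpa using (hr.ofReal_comp).mul_const C
  have h2 : HasDerivAt (fun t : ℝ => ∫ y in Ioi (0:ℝ),
      (1 - Complex.exp (-((t:ℂ) * y))) / ((y ^ (1+μ) : ℝ) : ℂ)) ((μ:ℂ) * C) 1 := by
    apply h1.congr_of_eventuallyEq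
    filter_upwards [Ioi_mem_nhds (one_pos : (0:ℝ) < 1)] with t ht
    exact F_scaling hμ0 hμ1 ht
  have h3 : HasDerivAt (fun t : ℝ => ∫ y in Ioi (0:ℝ),
      (1 - Complex.exp (-((t:ℂ) * y))) / ((y ^ (1+μ) : ℝ) : ℂ))
      (∫ y in Ioi (0:ℝ), (y:ℂ) * Complex.exp (-((1:ℂ) * y)) / ((y ^ (1+μ) : ℝ) : ℂ)) 1 := by
    have := (hasDerivAt_F hμ0 hμ1 (s := 1) (by norm_num)).comp_ofReal (z := 1)
    simpa using this
  have h4 : (μ:ℂ) * C = ((Real.Gamma (1-μ) : ℝ) : ℂ) := by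
    rw [← deriv_int_at_one hμ0 hμ1]
    exact h2.unique h3
  have hμne : (μ:ℂ) ≠ 0 := by exact_mod_cast hμ0.ne'
  rw [Complex.ofReal_div]
  rw [eq_div_iff (by exact_mod_cast hμ0.ne')]
  rw [mul_comm] at h4
  rw [h4]

lemma F_eq {μ : ℝ} (hμ0 : 0 < μ) (hμ1 : μ < 1) {s : ℂ} (hs : 0 < s.re) :
    (∫ y in Ioi (0:ℝ), (1 - Complex.exp (-(s * y))) / ((y ^ (1+μ) : ℝ) : ℂ)) =
      ((Real.Gamma (1-μ) / μ : ℝ) : ℂ) * s ^ (μ:ℂ) := by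
  set U : Set ℂ := {z : ℂ | 0 < z.re} with hU
  set F : ℂ → ℂ := fun z => ∫ y in Ioi (0:ℝ),
    (1 - Complex.exp (-(z * y))) / ((y ^ (1+μ) : ℝ) : ℂ) with hF
  set G : ℂ → ℂ := fun z => ((Real.Gamma (1-μ) / μ : ℝ) : ℂ) * z ^ (μ:ℂ) with hG
  have hUo : IsOpen U := isOpen_lt continuous_const Complex.continuous_re
  have hFa : AnalyticOnNhd ℂ F U :=
    DifferentiableOn.analyticOnNhd
      (fun z hz => ((hasDerivAt_F hμ0 hμ1 hz).differentiableAt).differentiableWithinAt) hUo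
  have hGa : AnalyticOnNhd ℂ G U := by
    apply DifferentiableOn.analyticOnNhd _ hUo
    intro z hz
    refine ((differentiableAt_id.cpow (differentiableAt_const _) ?_).const_mul
      _).differentiableWithinAt
    exact Complex.mem_slitPlane_iff.mpr (Or.inl hz)
  have h1U : (1:ℂ) ∈ U := by simp [hU]
  have hreal : ∀ t : ℝ, 0 < t → F t = G t := by
    intro t ht
    rw [hF, hG]
    simp only
    rw [F_scaling hμ0 hμ1 ht, F_one hμ0 hμ1, Complex.ofReal_cpow ht.le]
    ring
  have hfreq : ∃ᶠ z in nhdsWithin 1 {(1:ℂ)}ᶜ, F z = G z := by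
    have htend : Filter.Tendsto (fun n : ℕ => ((1 + ((n:ℝ)+1)⁻¹ : ℝ) : ℂ)) Filter.atTop
        (nhdsWithin 1 {(1:ℂ)}ᶜ) := by
      rw [tendsto_nhdsWithin_iff]
      constructor
      · have : Filter.Tendsto (fun n : ℕ => (1 + ((n:ℝ)+1)⁻¹ : ℝ)) Filter.atTop (nhds 1) := by
          simpa using tendsto_const_nhds.add (tendsto_one_div_add_atTop_nhds_zero_nat (𝕜 := ℝ))
        have := (Complex.continuous_ofReal.tendsto 1).comp this
        simpa [Function.comp_def] using this
      · refine Filter.Eventually.of_forall fun n => ?_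
        simp only [Set.mem_compl_iff, Set.mem_singleton_iff]
        intro h
        have : (1 + ((n:ℝ)+1)⁻¹ : ℝ) = 1 := by exact_mod_cast h
        have hpos : (0:ℝ) < ((n:ℝ)+1)⁻¹ := by positivity
        linarith
    apply htend.frequently
    apply Filter.Frequently.of_forall
    intro n
    exact hreal _ (by positivity)
  have := hFa.eqOn_of_preconnected_of_frequently_eq hGa
    ((convex_halfSpace_re_gt 0).isPreconnected) h1U hfreq
  exact this hs

lemma norm_f_le {μ c : ℝ} {s : ℂ} (hs : 0 ≤ s.re) (hsc : ‖s‖ ≤ c) {y : ℝ} (hy : 0 < y) :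
    ‖(1 - Complex.exp (-(s * y))) / ((y ^ (1+μ) : ℝ) : ℂ)‖ ≤ min 2 (2*c*y) * y ^ (-(1+μ)) := by
  rw [norm_div, Complex.norm_real, Real.norm_of_nonneg (Real.rpow_nonneg hy.le _),
    div_eq_mul_inv, ← Real.rpow_neg hy.le]
  gcongr
  refine le_min (norm_one_sub_exp_le_two hs y hy.le) ?_
  calc ‖1 - Complex.exp (-(s * y))‖ ≤ 2 * ‖s‖ * y := norm_one_sub_exp_le_lin hs y hy.le
  _ ≤ 2 * c * y := by gcongr

lemma F_boundary {μ : ℝ} (hμ0 : 0 < μ) (hμ1 : μ < 1) {l : ℝ} (hl : l ≠ 0) :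
    (∫ y in Ioi (0:ℝ),
        (1 - Complex.exp (-((Complex.I * l) * y))) / ((y ^ (1+μ) : ℝ) : ℂ)) =
      ((Real.Gamma (1-μ) / μ : ℝ) : ℂ) * (Complex.I * l) ^ (μ:ℂ) := by
  set c : ℂ := ((Real.Gamma (1-μ) / μ : ℝ) : ℂ) with hc
  set sn : ℕ → ℂ := fun n => ((((n:ℝ)+1)⁻¹ : ℝ) : ℂ) + Complex.I * l with hsn
  have hre : ∀ n, (sn n).re = ((n:ℝ)+1)⁻¹ := by
    intro n; simp [hsn, Complex.add_re, Complex.mul_re, -Complex.ofReal_inv]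
  have hrepos : ∀ n, 0 < (sn n).re := fun n => by rw [hre]; positivity
  have hnorm : ∀ n, ‖sn n‖ ≤ 1 + |l| := by
    intro n
    calc ‖sn n‖ ≤ ‖((((n:ℝ)+1)⁻¹ : ℝ) : ℂ)‖ + ‖Complex.I * (l:ℂ)‖ := norm_add_le _ _
    _ ≤ 1 + |l| := by
        rw [Complex.norm_real, norm_mul, Complex.norm_I,
          Complex.norm_real, one_mul, Real.norm_eq_abs, Real.norm_eq_abs]
        gcongr
        rw [_root_.abs_of_nonneg (by positivity : (0:ℝ) ≤ ((n:ℝ)+1)⁻¹)]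
        rw [inv_le_one_iff₀]
        right; linarith [Nat.cast_nonneg (α := ℝ) n]
  have htends : Filter.Tendsto sn Filter.atTop (nhds (Complex.I * l)) := by
    have h0 : Filter.Tendsto (fun n : ℕ => (((n:ℝ)+1)⁻¹ : ℝ)) Filter.atTop (nhds 0) := by
      simpa [one_div] using tendsto_one_div_add_atTop_nhds_zero_nat (𝕜 := ℝ)
    have h1 := (Complex.continuous_ofReal.tendsto 0).comp h0
    have := h1.add (tendsto_const_nhds (x := Complex.I * (l:ℂ)))
    simpa [hsn, Function.comp_def] using this
  have hlim1 : Filter.Tendsto (fun n => ∫ y in Ioi (0:ℝ),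
      (1 - Complex.exp (-(sn n * y))) / ((y ^ (1+μ) : ℝ) : ℂ)) Filter.atTop
      (nhds (∫ y in Ioi (0:ℝ),
        (1 - Complex.exp (-((Complex.I * l) * y))) / ((y ^ (1+μ) : ℝ) : ℂ))) := by
    apply tendsto_integral_of_dominated_convergence
      (bound := fun y => min 2 (2*(1+|l|)*y) * y ^ (-(1+μ)))
      (fun n => meas_f μ (sn n)) (dominator_integrable hμ0 hμ1 (by positivity))
    · intro n
      refine (ae_restrict_iff' measurableSet_Ioi).mpr (ae_of_all _ fun y hy => ?_)
      exact norm_f_le (hrepos n).le (hnorm n) hy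
    · refine (ae_restrict_iff' measurableSet_Ioi).mpr (ae_of_all _ fun y hy => ?_)
      have hcont : Continuous fun z : ℂ =>
          (1 - Complex.exp (-(z * y))) / ((y ^ (1+μ) : ℝ) : ℂ) := by
        exact (continuous_const.sub (Complex.continuous_exp.comp
          ((continuous_id.mul continuous_const).neg))).div_const _
      exact (hcont.tendsto _).comp htends
  have hlim2 : Filter.Tendsto (fun n => c * sn n ^ (μ:ℂ)) Filter.atTop
      (nhds (c * (Complex.I * l) ^ (μ:ℂ))) := by
    have hslit : Complex.I * (l:ℂ) ∈ Complex.slitPlane :=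
      Complex.mem_slitPlane_iff.mpr (Or.inr (by simp [hl]))
    have := (continuousAt_cpow_const (b := (μ:ℂ)) hslit).tendsto.comp htends
    exact this.const_mul c
  have heq : ∀ n, (∫ y in Ioi (0:ℝ),
      (1 - Complex.exp (-(sn n * y))) / ((y ^ (1+μ) : ℝ) : ℂ)) = c * sn n ^ (μ:ℂ) :=
    fun n => F_eq hμ0 hμ1 (hrepos n)
  have hlim1' := (Filter.tendsto_congr heq).mp hlim1
  exact tendsto_nhds_unique hlim1' hlim2

/-- The Marchaud fractional derivative of order `μ ∈ (0,1)` maps the periodic function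
`x ↦ e^{ilx}` to a constant multiple of itself:
`(μ/Γ(1-μ)) ∫₀^∞ (e^{ilx} - e^{il(x-y)})/y^{1+μ} dy = (il)^μ e^{ilx}`,
where `(il)^μ` is the principal branch of the complex power (equal to `0` when `l = 0`). -/
theorem marchaud_deriv_exp (μ l x : ℝ) (hμ0 : 0 < μ) (hμ1 : μ < 1) :
    IntegrableOn
      (fun y : ℝ =>
        (Complex.exp (Complex.I * (l : ℂ) * (x : ℂ)) -
            Complex.exp (Complex.I * (l : ℂ) * ((x - y : ℝ) : ℂ))) / ((y ^ (1 + μ) : ℝ) : ℂ))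
      (Set.Ioi 0) ∧
    ((μ / Real.Gamma (1 - μ) : ℝ) : ℂ) *
        ∫ y in Set.Ioi (0 : ℝ),
          (Complex.exp (Complex.I * (l : ℂ) * (x : ℂ)) -
              Complex.exp (Complex.I * (l : ℂ) * ((x - y : ℝ) : ℂ))) / ((y ^ (1 + μ) : ℝ) : ℂ) =
      (Complex.I * (l : ℂ)) ^ (μ : ℂ) * Complex.exp (Complex.I * (l : ℂ) * (x : ℂ)) := by
  set s₀ : ℂ := Complex.I * (l : ℂ) with hs₀
  set C : ℂ := Complex.exp (Complex.I * (l : ℂ) * (x : ℂ)) with hCdef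
  have hpt : (fun y : ℝ =>
      (Complex.exp (Complex.I * (l : ℂ) * (x : ℂ)) -
        Complex.exp (Complex.I * (l : ℂ) * ((x - y : ℝ) : ℂ))) / ((y ^ (1 + μ) : ℝ) : ℂ)) =
      fun y : ℝ => C * ((1 - Complex.exp (-(s₀ * y))) / ((y ^ (1 + μ) : ℝ) : ℂ)) := by
    funext y
    have harg : Complex.I * (l : ℂ) * ((x:ℂ) - (y:ℂ)) =
        Complex.I * (l : ℂ) * (x : ℂ) + (-(s₀ * y)) := by rw [hs₀]; ring
    rw [Complex.ofReal_sub, harg, Complex.exp_add, hCdef]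
    ring
  have hre0 : (0:ℝ) ≤ s₀.re := by simp [hs₀]
  have hint : IntegrableOn
      (fun y : ℝ => (1 - Complex.exp (-(s₀ * y))) / ((y ^ (1 + μ) : ℝ) : ℂ)) (Ioi 0) :=
    integrable_f hμ0 hμ1 hre0 le_rfl
  constructor
  · rw [hpt]
    exact hint.const_mul C
  · rw [hpt, MeasureTheory.integral_const_mul]
    rcases eq_or_ne l 0 with hl | hl
    · have hz : s₀ = 0 := by simp [hs₀, hl]
      have hμne : (μ:ℂ) ≠ 0 := by exact_mod_cast hμ0.ne'
      simp [hz, Complex.zero_cpow hμne]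
    · rw [F_boundary hμ0 hμ1 hl]
      have hΓ : Real.Gamma (1-μ) ≠ 0 := (Real.Gamma_pos_of_pos (by linarith)).ne'
      have h1 : ((μ / Real.Gamma (1 - μ) : ℝ) : ℂ) * ((Real.Gamma (1-μ) / μ : ℝ) : ℂ) = 1 := by
        rw [← Complex.ofReal_mul]
        rw [show (μ / Real.Gamma (1 - μ)) * (Real.Gamma (1-μ) / μ) = 1 by
          field_simp]
        norm_num
      calc ((μ / Real.Gamma (1 - μ) : ℝ) : ℂ) *
            (C * (((Real.Gamma (1-μ) / μ : ℝ) : ℂ) * s₀ ^ (μ:ℂ)))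
          = (((μ / Real.Gamma (1 - μ) : ℝ) : ℂ) * ((Real.Gamma (1-μ) / μ : ℝ) : ℂ)) *
            (s₀ ^ (μ:ℂ) * C) := by ring
      _ = s₀ ^ (μ:ℂ) * C := by rw [h1, one_mul]
end

section
/- Let 0 < μ < 1 and let p ∈ ℂ with Re p > 0. Then the function y ↦ (1 − e^{−p y}) / y^{1+μ} is integrable on (0, ∞) and ∫_0^∞ (1 − e^{−p y}) / y^{1+μ} dy = Γ(1−μ) · p^μ / μ, where p^μ is the principal branch of the complex power. -/
open MeasureTheory

open Set Filter Topology

private lemma aux_int {s t : ℝ} (hs : 0 < s) (ht : 0 < t) :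
    IntegrableOn (fun y : ℝ => y ^ (s - 1) * Real.exp (-(t * y))) (Ioi 0) := by
  have base : IntegrableOn (fun x : ℝ => Real.exp (-x) * x ^ (s - 1)) (Ioi 0) :=
    Real.GammaIntegral_convergent hs
  have h1 : IntegrableOn (fun x : ℝ => Real.exp (-(t * x)) * (t * x) ^ (s - 1)) (Ioi 0) := by
    have := (integrableOn_Ioi_comp_mul_left_iff
      (fun x : ℝ => Real.exp (-x) * x ^ (s - 1)) 0 ht).mpr (by simpa using base)
    simpa using this
  have h2 : IntegrableOn (fun x : ℝ => t ^ (1 - s) * (Real.exp (-(t * x)) * (t * x) ^ (s - 1))) (Ioi 0) := h1.const_mul (t ^ (1 - s))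
  refine h2.congr_fun (fun x hx => ?_) measurableSet_Ioi
  rw [mem_Ioi] at hx
  beta_reduce
  rw [Real.mul_rpow ht.le hx.le]
  rw [show t ^ (1 - s) * (Real.exp (-(t * x)) * (t ^ (s - 1) * x ^ (s - 1)))
      = (t ^ (1 - s) * t ^ (s - 1)) * (x ^ (s - 1) * Real.exp (-(t * x))) by ring,
    ← Real.rpow_add ht]
  norm_num

private lemma aux_intg (μ : ℝ) (hμ1 : μ < 1) (p : ℂ) (hp : 0 < p.re) :
    IntegrableOn (fun y : ℝ => Complex.exp (-(p * y)) * ((y ^ (-μ) : ℝ) : ℂ)) (Ioi 0) := by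
  refine Integrable.mono' (aux_int (by linarith : (0:ℝ) < 1 - μ) hp) ?_ ?_
  · apply Measurable.aestronglyMeasurable
    exact (Complex.measurable_exp.comp (by fun_prop)).mul
      (Complex.measurable_ofReal.comp (measurable_id.pow_const _))
  · filter_upwards [ae_restrict_mem measurableSet_Ioi] with y hy
    rw [mem_Ioi] at hy
    rw [norm_mul, Complex.norm_exp, Complex.norm_real, Real.norm_eq_abs, abs_of_nonneg (Real.rpow_nonneg hy.le _)]
    have : (-(p * (y:ℂ))).re = -(p.re * y) := by simp [Complex.mul_re]
    rw [this, show (1:ℝ) - μ - 1 = -μ by ring, mul_comm]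

private lemma aux_gamma (μ : ℝ) (hμ0 : 0 < μ) (hμ1 : μ < 1) (p : ℂ) (hp : 0 < p.re) :
    ∫ y in Ioi (0:ℝ), Complex.exp (-(p * y)) * ((y ^ (-μ) : ℝ) : ℂ)
      = (Real.Gamma (1 - μ) : ℂ) * p ^ ((μ:ℂ) - 1) := by
  set L : ℂ → ℂ := fun q => ∫ y in Ioi (0:ℝ), Complex.exp (-(q * y)) * ((y ^ (-μ) : ℝ) : ℂ)
    with hLdef
  set R : ℂ → ℂ := fun q => (Real.Gamma (1 - μ) : ℂ) * q ^ ((μ:ℂ) - 1) with hRdef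
  set U : Set ℂ := {z : ℂ | 0 < z.re} with hUdef
  have hUopen : IsOpen U := isOpen_lt continuous_const Complex.continuous_re
  have hmeas : ∀ x : ℂ, AEStronglyMeasurable
      (fun y : ℝ => Complex.exp (-(x * y)) * ((y ^ (-μ) : ℝ) : ℂ))
      (volume.restrict (Ioi 0)) := fun x =>
    Measurable.aestronglyMeasurable <|
      (Complex.measurable_exp.comp (by fun_prop)).mul
        (Complex.measurable_ofReal.comp (measurable_id.pow_const _))
  have hLd : DifferentiableOn ℂ L U := by
    intro q hq
    have hq' : 0 < q.re := hq
    have meas' : AEStronglyMeasurable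
        (fun y : ℝ => (-(y:ℂ)) * (Complex.exp (-(q * y)) * ((y ^ (-μ) : ℝ) : ℂ)))
        (volume.restrict (Ioi 0)) :=
      Measurable.aestronglyMeasurable <|
        ((Complex.measurable_ofReal.comp measurable_id).neg).mul
          ((Complex.measurable_exp.comp (by fun_prop)).mul
            (Complex.measurable_ofReal.comp (measurable_id.pow_const _)))
    have hbnd : ∀ᵐ (y : ℝ) ∂(volume.restrict (Ioi (0:ℝ))), ∀ x ∈ Metric.ball q (q.re / 2),
        ‖(-(y:ℂ)) * (Complex.exp (-(x * y)) * ((y ^ (-μ) : ℝ) : ℂ))‖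
          ≤ y ^ ((2 - μ) - 1) * Real.exp (-(q.re / 2 * y)) := by
      filter_upwards [ae_restrict_mem measurableSet_Ioi] with y hy
      rw [mem_Ioi] at hy
      intro x hx
      have hxre : q.re / 2 ≤ x.re := by
        have h1 := Complex.abs_re_le_norm (x - q)
        rw [Complex.sub_re] at h1
        have hb : ‖x - q‖ < q.re / 2 := by
          simpa [Metric.mem_ball, Complex.dist_eq] using hx
        have h2 := abs_lt.mp (lt_of_le_of_lt h1 hb)
        linarith [h2.1]
      rw [norm_mul, norm_mul, norm_neg, Complex.norm_real y, Real.norm_eq_abs,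
        abs_of_nonneg hy.le, Complex.norm_exp, Complex.norm_real, Real.norm_eq_abs, abs_of_nonneg (Real.rpow_nonneg hy.le _)]
      have h1 : (-(x * (y:ℂ))).re = -(x.re * y) := by simp [Complex.mul_re]
      rw [h1]
      have h2 : y * (Real.exp (-(x.re * y)) * y ^ (-μ))
          = (y ^ (1:ℝ) * y ^ (-μ)) * Real.exp (-(x.re * y)) := by
        rw [Real.rpow_one]; ring
      rw [h2, ← Real.rpow_add hy, show (1:ℝ) + -μ = (2 - μ) - 1 by ring]
      have h3 : Real.exp (-(x.re * y)) ≤ Real.exp (-(q.re / 2 * y)) := by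
        apply Real.exp_le_exp.mpr
        have := mul_le_mul_of_nonneg_right hxre hy.le
        linarith
      exact mul_le_mul_of_nonneg_left h3 (Real.rpow_nonneg hy.le _)
    have hdiff : ∀ᵐ (y : ℝ) ∂(volume.restrict (Ioi (0:ℝ))), ∀ x ∈ Metric.ball q (q.re / 2),
        HasDerivAt (fun z : ℂ => Complex.exp (-(z * y)) * ((y ^ (-μ) : ℝ) : ℂ))
          ((-(y:ℂ)) * (Complex.exp (-(x * y)) * ((y ^ (-μ) : ℝ) : ℂ))) x := by
      filter_upwards with y
      intro x hx
      have h0 : HasDerivAt (fun z : ℂ => -(z * (y:ℂ))) (-(y:ℂ)) x := by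
        exact (hasDerivAt_mul_const (y:ℂ)).neg
      have h1 := (h0.cexp).mul_const ((y ^ (-μ) : ℝ) : ℂ)
      exact h1.congr_deriv (by ring)
    obtain ⟨-, hd⟩ := hasDerivAt_integral_of_dominated_loc_of_deriv_le
      (F := fun (x : ℂ) (y : ℝ) => Complex.exp (-(x * y)) * ((y ^ (-μ) : ℝ) : ℂ))
      (F' := fun (x : ℂ) (y : ℝ) => (-(y:ℂ)) * (Complex.exp (-(x * y)) * ((y ^ (-μ) : ℝ) : ℂ)))
      (x₀ := q) (s := Metric.ball q (q.re / 2))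
      (bound := fun y => y ^ ((2 - μ) - 1) * Real.exp (-(q.re / 2 * y)))
      (Metric.ball_mem_nhds q (by positivity)) (Eventually.of_forall hmeas) (aux_intg μ hμ1 q hq')
      meas' hbnd (aux_int (by linarith) (by positivity)) hdiff
    exact hd.differentiableAt.differentiableWithinAt
  have hRd : DifferentiableOn ℂ R U := by
    intro q hq
    have hq' : 0 < q.re := hq
    apply DifferentiableAt.differentiableWithinAt
    exact (differentiableAt_id.cpow (differentiableAt_const _) (Complex.mem_slitPlane_iff.mpr (Or.inl hq'))).const_mul _
  have hLa : AnalyticOnNhd ℂ L U := hLd.analyticOnNhd hUopen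
  have hRa : AnalyticOnNhd ℂ R U := hRd.analyticOnNhd hUopen
  have hreal : ∀ r : ℝ, 0 < r → L r = R r := by
    intro r hr
    have key := Complex.integral_cpow_mul_exp_neg_mul_Ioi
      (a := 1 - (μ:ℂ)) (r := r) (by simp [Complex.sub_re]; linarith) hr
    have h1 : L r = ∫ t : ℝ in Ioi 0, (t:ℂ) ^ ((1 - (μ:ℂ)) - 1) * Complex.exp (-(r * t)) := by
      rw [hLdef]
      refine setIntegral_congr_fun measurableSet_Ioi (fun t ht => ?_)
      rw [mem_Ioi] at ht
      rw [mul_comm, show (1 - (μ:ℂ)) - 1 = -(μ:ℂ) by ring,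
        show (-(μ:ℂ)) = ((-μ : ℝ) : ℂ) by push_cast; ring,
        ← Complex.ofReal_cpow ht.le]
      try norm_num
    rw [h1, key, hRdef]
    have hrne : (r:ℂ) ≠ 0 := by
      simp only [ne_eq, Complex.ofReal_eq_zero]; exact hr.ne'
    have harg : (r:ℂ).arg ≠ Real.pi := by
      rw [Complex.arg_ofReal_of_nonneg hr.le]; exact Real.pi_ne_zero.symm
    rw [one_div, Complex.inv_cpow _ _ harg, ← Complex.cpow_neg,
      show -(1 - (μ:ℂ)) = (μ:ℂ) - 1 by ring,
      show (1 : ℂ) - (μ:ℂ) = ((1 - μ : ℝ) : ℂ) by push_cast; ring,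
      Complex.Gamma_ofReal, mul_comm]
  have hfreq : ∃ᶠ z in nhdsWithin (1:ℂ) {(1:ℂ)}ᶜ, L z = R z := by
    have ht : Tendsto (fun x : ℝ => (x:ℂ)) (nhdsWithin (1:ℝ) {(1:ℝ)}ᶜ)
        (nhdsWithin (1:ℂ) {(1:ℂ)}ᶜ) := by
      apply tendsto_nhdsWithin_of_tendsto_nhds_of_eventually_within
      · exact (Complex.continuous_ofReal.tendsto 1).mono_left nhdsWithin_le_nhds
      · filter_upwards [self_mem_nhdsWithin] with x hx
        simpa [Complex.ofReal_eq_one] using hx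
    apply ht.frequently
    apply Eventually.frequently
    filter_upwards [eventually_nhdsWithin_of_eventually_nhds
      (eventually_gt_nhds (by norm_num : (0:ℝ) < 1))] with x hx
    exact hreal x hx
  have := hLa.eqOn_of_preconnected_of_frequently_eq hRa
    (convex_halfSpace_re_gt 0).isPreconnected (by simp [hUdef] : (1:ℂ) ∈ U) hfreq
  exact this (by simpa [hUdef] using hp)

/-- For `0 < μ < 1` and `p ∈ ℂ` with `Re p > 0`, the function `y ↦ (1 - e^{-py})/y^{1+μ}` is
integrable on `(0,∞)` and `∫₀^∞ (1 - e^{-py})/y^{1+μ} dy = Γ(1-μ) p^μ / μ`, with the principal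
branch of the complex power. -/
theorem integral_one_sub_exp_div_rpow (μ : ℝ) (hμ0 : 0 < μ) (hμ1 : μ < 1) (p : ℂ)
    (hp : 0 < p.re) :
    IntegrableOn (fun y : ℝ => (1 - Complex.exp (-(p * (y : ℂ)))) / ((y ^ (1 + μ) : ℝ) : ℂ))
      (Set.Ioi 0) ∧
    ∫ y in Set.Ioi (0 : ℝ), (1 - Complex.exp (-(p * (y : ℂ)))) / ((y ^ (1 + μ) : ℝ) : ℂ) =
      ((Real.Gamma (1 - μ) : ℝ) : ℂ) * p ^ (μ : ℂ) / (μ : ℂ) := by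
  have hp0 : p ≠ 0 := fun h => by simp [h] at hp
  have hμc : (μ : ℂ) ≠ 0 := by exact_mod_cast Complex.ofReal_ne_zero.mpr hμ0.ne'
  set f : ℝ → ℂ := fun y => (1 - Complex.exp (-(p * (y : ℂ)))) / ((y ^ (1 + μ) : ℝ) : ℂ)
    with hfdef
  set g : ℝ → ℂ := fun y => Complex.exp (-(p * y)) * ((y ^ (-μ) : ℝ) : ℂ) with hgdef
  -- norm bounds on 1 - exp(-py)
  have hB2 : ∀ y : ℝ, 0 ≤ y → ‖1 - Complex.exp (-(p * y))‖ ≤ 2 := by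
    intro y hy
    calc ‖1 - Complex.exp (-(p * y))‖ ≤ ‖(1:ℂ)‖ + ‖Complex.exp (-(p * y))‖ := norm_sub_le _ _
    _ ≤ 1 + 1 := by
        gcongr
        · simp
        · rw [Complex.norm_exp]
          apply Real.exp_le_one_iff.mpr
          have : (-(p * (y:ℂ))).re = -(p.re * y) := by simp [Complex.mul_re]
          rw [this]
          simpa using mul_nonneg hp.le hy
    _ = 2 := by norm_num
  have hBlin : ∀ y : ℝ, 0 ≤ y → ‖1 - Complex.exp (-(p * y))‖ ≤ 2 * ‖p‖ * y := by
    intro y hy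
    rcases le_or_gt (‖p‖ * y) 1 with h | h
    · have habs : ‖-(p * (y:ℂ))‖ ≤ 1 := by
        rwa [norm_neg, norm_mul, Complex.norm_real, Real.norm_eq_abs, abs_of_nonneg hy]
      have := Complex.norm_exp_sub_one_le habs
      rw [← norm_neg]
      simp only [neg_sub]
      calc ‖Complex.exp (-(p * y)) - 1‖ ≤ 2 * ‖-(p * (y:ℂ))‖ := this
      _ = 2 * ‖p‖ * y := by
          rw [norm_neg, norm_mul, Complex.norm_real, Real.norm_eq_abs, abs_of_nonneg hy]; ring
    · calc ‖1 - Complex.exp (-(p * y))‖ ≤ 2 := hB2 y hy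
      _ ≤ 2 * (‖p‖ * y) := by nlinarith
      _ = 2 * ‖p‖ * y := by ring
  -- continuity of f on Ioi 0
  have hcontf : ContinuousOn f (Ioi 0) := by
    apply ContinuousOn.div
    · exact (continuous_const.sub (Complex.continuous_exp.comp
        (by continuity))).continuousOn
    · apply Complex.continuous_ofReal.comp_continuousOn
      intro y hy
      exact (Real.continuousAt_rpow_const y _ (Or.inl (ne_of_gt hy))).continuousWithinAt
    · intro y hy
      rw [mem_Ioi] at hy
      exact_mod_cast Complex.ofReal_ne_zero.mpr (Real.rpow_pos_of_pos hy _).ne'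
  -- integrability of f
  have hIntf : IntegrableOn f (Ioi 0) := by
    rw [show (Ioi (0:ℝ)) = Ioc 0 1 ∪ Ioi 1 from (Ioc_union_Ioi_eq_Ioi zero_le_one).symm]
    apply IntegrableOn.union
    · -- on Ioc 0 1
      have hbd : IntegrableOn (fun y : ℝ => 2 * ‖p‖ * y ^ (-μ)) (Ioc 0 1) := by
        exact ((intervalIntegrable_iff_integrableOn_Ioc_of_le zero_le_one).mp
          (intervalIntegral.intervalIntegrable_rpow' (by linarith))).const_mul _
      refine Integrable.mono' hbd
        ((hcontf.mono Ioc_subset_Ioi_self).aestronglyMeasurable measurableSet_Ioc) ?_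
      filter_upwards [ae_restrict_mem measurableSet_Ioc] with y hy
      obtain ⟨hy0, hy1⟩ := hy
      rw [hfdef]
      simp only
      rw [norm_div, Complex.norm_real _, Real.norm_eq_abs,
        abs_of_nonneg (Real.rpow_nonneg hy0.le _), div_le_iff₀ (Real.rpow_pos_of_pos hy0 _)]
      calc ‖1 - Complex.exp (-(p * y))‖ ≤ 2 * ‖p‖ * y := hBlin y hy0.le
      _ = 2 * ‖p‖ * (y ^ (-μ) * y ^ (1 + μ)) := by
          rw [← Real.rpow_add hy0, show -μ + (1 + μ) = 1 by ring, Real.rpow_one]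
      _ = 2 * ‖p‖ * y ^ (-μ) * y ^ (1 + μ) := by ring
    · -- on Ioi 1
      have hbd : IntegrableOn (fun y : ℝ => 2 * y ^ (-(1 + μ))) (Ioi 1) :=
        (integrableOn_Ioi_rpow_of_lt (by linarith) zero_lt_one).const_mul 2
      refine Integrable.mono' hbd
        ((hcontf.mono (Ioi_subset_Ioi zero_le_one)).aestronglyMeasurable measurableSet_Ioi) ?_
      filter_upwards [ae_restrict_mem measurableSet_Ioi] with y hy
      rw [mem_Ioi] at hy
      have hy0 : (0:ℝ) < y := lt_trans zero_lt_one hy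
      rw [hfdef]
      simp only
      rw [norm_div, Complex.norm_real _, Real.norm_eq_abs,
        abs_of_nonneg (Real.rpow_nonneg hy0.le _), div_le_iff₀ (Real.rpow_pos_of_pos hy0 _)]
      calc ‖1 - Complex.exp (-(p * y))‖ ≤ 2 := hB2 y hy0.le
      _ = 2 * y ^ (-(1 + μ)) * y ^ (1 + μ) := by
          rw [mul_assoc, ← Real.rpow_add hy0, show -(1 + μ) + (1 + μ) = 0 by ring,
            Real.rpow_zero, mul_one]
  have hIntg : IntegrableOn g (Ioi 0) := aux_intg μ hμ1 p hp
  -- the primitive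
  set F : ℝ → ℂ := fun y => -(1 / (μ:ℂ)) * ((1 - Complex.exp (-(p * y))) * ((y ^ (-μ) : ℝ) : ℂ))
    with hFdef
  have hF0 : F 0 = 0 := by
    rw [hFdef]; simp
  have hderiv : ∀ y ∈ Ioi (0:ℝ), HasDerivAt F (f y - (p / μ) * g y) y := by
    intro y hy
    rw [mem_Ioi] at hy
    have h1 : HasDerivAt (fun x : ℝ => Complex.exp (-(p * x)))
        (Complex.exp (-(p * y)) * -p) y := by
      have hz : HasDerivAt (fun z : ℂ => Complex.exp (-(p * z)))
          (Complex.exp (-(p * (y:ℂ))) * -p) (y:ℂ) := by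
        have : HasDerivAt (fun z : ℂ => -(p * z)) (-p) (y:ℂ) := by
          exact (((hasDerivAt_id (y:ℂ)).const_mul p).neg).congr_deriv (by simp)
        exact this.cexp
      exact hz.comp_ofReal
    have h2 : HasDerivAt (fun x : ℝ => ((x ^ (-μ) : ℝ) : ℂ))
        (((-μ * y ^ (-μ - 1) : ℝ) : ℂ)) y :=
      (Real.hasDerivAt_rpow_const (Or.inl hy.ne')).ofReal_comp
    have h3 := ((h1.const_sub 1).mul h2).const_mul (-(1 / (μ:ℂ)))
    refine h3.congr_deriv ?_
    have hw : ((y ^ (-μ - 1) : ℝ) : ℂ) = (((y ^ (1 + μ) : ℝ)) : ℂ)⁻¹ := by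
      rw [show -μ - 1 = -(1 + μ) by ring, Real.rpow_neg hy.le, Complex.ofReal_inv]
    have hne : (((y ^ (1 + μ) : ℝ)) : ℂ) ≠ 0 :=
      Complex.ofReal_ne_zero.mpr (Real.rpow_pos_of_pos hy _).ne'
    rw [hfdef, hgdef]
    simp only
    push_cast [hw]
    field_simp
    ring
  have hF'int : IntegrableOn (fun y => f y - (p / μ) * g y) (Ioi 0) :=
    hIntf.sub (hIntg.const_mul _)
  -- continuity of F at 0 from the right
  have hcont : ContinuousWithinAt F (Ici 0) 0 := by
    rw [ContinuousWithinAt, hF0]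
    apply squeeze_zero_norm'
      (a := fun y => (2 * ‖p‖ / μ) * y ^ (1 - μ))
    · filter_upwards [self_mem_nhdsWithin] with y (hy : y ∈ Ici 0)
      rw [mem_Ici] at hy
      rw [hFdef]
      simp only
      rw [norm_mul, norm_mul, norm_neg, Complex.norm_real _, Real.norm_eq_abs,
        abs_of_nonneg (Real.rpow_nonneg hy _)]
      rcases eq_or_lt_of_le hy with h | h
      · rw [← h]
        simp [Real.zero_rpow (by linarith : 1 - μ ≠ 0), Real.zero_rpow (by linarith : -μ ≠ 0)]
      · have : ‖(1:ℂ)/(μ:ℂ)‖ = 1/μ := by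
          rw [norm_div, Complex.norm_real _, Real.norm_eq_abs,
            abs_of_nonneg hμ0.le]; simp
        rw [one_div, norm_inv, Complex.norm_real _, Real.norm_eq_abs,
          abs_of_nonneg hμ0.le]
        calc μ⁻¹ * (‖1 - Complex.exp (-(p * y))‖ * y ^ (-μ))
            ≤ μ⁻¹ * ((2 * ‖p‖ * y) * y ^ (-μ)) := by
              gcongr
              · exact hBlin y hy
        _ = 2 * ‖p‖ / μ * (y ^ (1:ℝ) * y ^ (-μ)) := by
              rw [Real.rpow_one]; ring
        _ = 2 * ‖p‖ / μ * y ^ (1 - μ) := by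
              rw [← Real.rpow_add h, show (1:ℝ) + -μ = 1 - μ by ring]
    · have hc : ContinuousAt (fun y : ℝ => y ^ (1 - μ)) 0 :=
        Real.continuousAt_rpow_const 0 _ (Or.inr (by linarith))
      have h2 : Tendsto (fun y : ℝ => y ^ (1 - μ)) (nhdsWithin (0:ℝ) (Ici 0)) (𝓝 (0 ^ (1 - μ))) :=
        hc.tendsto.mono_left nhdsWithin_le_nhds
      have h3 := h2.const_mul (2 * ‖p‖ / μ)
      simpa [Real.zero_rpow (by linarith : 1 - μ ≠ 0)] using h3
  -- limit of F at infinity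
  have htop : Tendsto F atTop (𝓝 0) := by
    apply squeeze_zero_norm' (a := fun y => (2 / μ) * y ^ (-μ))
    · filter_upwards [eventually_ge_atTop (0:ℝ)] with y hy
      rw [hFdef]
      simp only
      rw [norm_mul, norm_mul, norm_neg, Complex.norm_real _, Real.norm_eq_abs,
        abs_of_nonneg (Real.rpow_nonneg hy _), one_div, norm_inv,
        Complex.norm_real _, Real.norm_eq_abs, abs_of_nonneg hμ0.le]
      calc μ⁻¹ * (‖1 - Complex.exp (-(p * y))‖ * y ^ (-μ))
          ≤ μ⁻¹ * (2 * y ^ (-μ)) := by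
            gcongr
            · exact hB2 y hy
      _ = 2 / μ * y ^ (-μ) := by ring
    · simpa using (tendsto_rpow_neg_atTop hμ0).const_mul (2 / μ)
  have key : ∫ y in Ioi (0:ℝ), (f y - (p / μ) * g y) = 0 - F 0 :=
    integral_Ioi_of_hasDerivAt_of_tendsto hcont hderiv hF'int htop
  rw [hF0, sub_zero] at key
  have hsplit : ∫ y in Ioi (0:ℝ), (f y - (p / μ) * g y)
      = (∫ y in Ioi (0:ℝ), f y) - (p / μ) * ∫ y in Ioi (0:ℝ), g y := by
    rw [integral_sub hIntf (hIntg.const_mul _), integral_const_mul]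
  rw [hsplit] at key
  have hgval := aux_gamma μ hμ0 hμ1 p hp
  refine ⟨hIntf, ?_⟩
  have : (∫ y in Ioi (0:ℝ), f y) = (p / μ) * ((Real.Gamma (1 - μ) : ℂ) * p ^ ((μ:ℂ) - 1)) := by
    rw [← hgval]
    linear_combination key
  rw [this, show (μ:ℂ) = ((μ:ℂ) - 1) + 1 by ring, Complex.cpow_add _ _ hp0, Complex.cpow_one]
  field_simp
  ring
end
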